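/- arXiv:2401.06405 — 5 statements merged into one kernel-verified Lean document; each statement's English description precedes it below -/
import Mathlib

section
/- Let S ⊆ ℤ^n. If S is closed under the directed discrete midpoint operation μ, then S is integrally convex. -/
/-- Componentwise closedness of a set of `ι`-indexed integer vectors under a
`k`-ary operation `f : ℤ^k → ℤ`. -/
def CptClosed {k : ℕ} {ι : Type*} (f : (Fin k → ℤ) → ℤ) (S : Set (ι → ℤ)) : Prop :=
  ∀ x : Fin k → ι → ℤ, (∀ l, x l ∈ S) → (fun i => f (fun l => x l i)) ∈ S

/-- `f : ℤ³ → ℤ` is a majority operation. -/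
def IsMajorityOp (f : (Fin 3 → ℤ) → ℤ) : Prop :=
  ∀ a b : ℤ, f ![a, a, b] = a ∧ f ![a, b, a] = a ∧ f ![b, a, a] = a

/-- `S` is closed under some majority operation. -/
def MajClosed {ι : Type*} (S : Set (ι → ℤ)) : Prop :=
  ∃ f : (Fin 3 → ℤ) → ℤ, IsMajorityOp f ∧ CptClosed f S

/-- The projection `π_{i,j}(x) = (x_i, x_j)`. -/
def proj2 {n : ℕ} (i j : Fin n) (x : Fin n → ℤ) : Fin 2 → ℤ := ![x i, x j]

/-- The projection `π_{i,j}(S)`. -/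
def projSet {n : ℕ} (i j : Fin n) (S : Set (Fin n → ℤ)) : Set (Fin 2 → ℤ) :=
  proj2 i j '' S

/-- The join `⋈_{1 ≤ i < j ≤ n} F i j`. -/
def joinPairs {n : ℕ} (F : Fin n → Fin n → Set (Fin 2 → ℤ)) : Set (Fin n → ℤ) :=
  {x | ∀ i j : Fin n, i < j → proj2 i j x ∈ F i j}

/-- The `f`-closure of `S`: the intersection of all `f`-closed supersets of `S`. -/
def clOp {k m : ℕ} (f : (Fin k → ℤ) → ℤ) (S : Set (Fin m → ℤ)) : Set (Fin m → ℤ) :=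
  ⋂₀ {T | S ⊆ T ∧ CptClosed f T}

/-- The directed discrete midpoint operation `μ`. -/
def muOp : (Fin 2 → ℤ) → ℤ := fun t =>
  if t 1 ≤ t 0 then ⌈((t 0 + t 1 : ℤ) : ℚ) / 2⌉ else ⌊((t 0 + t 1 : ℤ) : ℚ) / 2⌋

/-- The operation `g(x,y) = ⌈(x+y)/2⌉`. -/
def ceilAvgOp : (Fin 2 → ℤ) → ℤ := fun t => ⌈((t 0 + t 1 : ℤ) : ℚ) / 2⌉

/-- The operation `h(x,y) = ⌊(x+y)/2⌋`. -/
def floorAvgOp : (Fin 2 → ℤ) → ℤ := fun t => ⌊((t 0 + t 1 : ℤ) : ℚ) / 2⌋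

/-- The median operation on three integers. -/
def medianOp : (Fin 3 → ℤ) → ℤ := fun t =>
  max (max (min (t 0) (t 1)) (min (t 1) (t 2))) (min (t 0) (t 2))

/-- The canonical embedding `ℤ^m → ℝ^m`. -/
def toR {m : ℕ} (z : Fin m → ℤ) : Fin m → ℝ := fun l => (z l : ℝ)

/-- The integer neighborhood `N(x)` of a real vector `x`. -/
def intNbhd {m : ℕ} (x : Fin m → ℝ) : Set (Fin m → ℤ) :=
  {z | ∀ j, |(z j : ℝ) - x j| < 1}

/-- `S` is midpoint-neighbor-closed: for all `x, y ∈ S`, `N((x+y)/2) ⊆ S`. -/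
def MidpointNeighborClosed {m : ℕ} (S : Set (Fin m → ℤ)) : Prop :=
  ∀ x ∈ S, ∀ y ∈ S, ∀ z : Fin m → ℤ,
    (∀ j, |(z j : ℝ) - ((x j : ℝ) + (y j : ℝ)) / 2| < 1) → z ∈ S

/-- `S ⊆ ℤ^m` is integrally convex. -/
def IntegrallyConvex {m : ℕ} (S : Set (Fin m → ℤ)) : Prop :=
  ∀ x : Fin m → ℝ, x ∈ convexHull ℝ (toR '' S) →
    x ∈ convexHull ℝ (toR '' (S ∩ intNbhd x))

/-- The closed convex closure of `T ⊆ ℤ^m` inside `ℝ^m`: the intersection of all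
topologically closed convex sets containing `T`. -/
def closedConvexClosure {m : ℕ} (T : Set (Fin m → ℤ)) : Set (Fin m → ℝ) :=
  ⋂₀ {C : Set (Fin m → ℝ) | Convex ℝ C ∧ IsClosed C ∧ toR '' T ⊆ C}

/-- `S = cl_conv̄(S) ∩ ℤ^m`. -/
def ClosedConvexIntegral {m : ℕ} (S : Set (Fin m → ℤ)) : Prop :=
  S = {z : Fin m → ℤ | toR z ∈ closedConvexClosure S}

/-- All entries of `A` lie in `{0, -1, +1}`. -/
def UnitMatrix {mR n : ℕ} (A : Matrix (Fin mR) (Fin n) ℤ) : Prop :=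
  ∀ i j, A i j = 0 ∨ A i j = -1 ∨ A i j = 1

/-- Each row of `A` has at most `c` nonzero entries. -/
def RowSupportLE {mR n : ℕ} (A : Matrix (Fin mR) (Fin n) ℤ) (c : ℕ) : Prop :=
  ∀ i, {j | A i j ≠ 0}.ncard ≤ c

/-- `S` is representable by a UTVPI system. -/
def RepUTVPI {n : ℕ} (S : Set (Fin n → ℤ)) : Prop :=
  ∃ (mR : ℕ) (A : Matrix (Fin mR) (Fin n) ℤ) (b : Fin mR → ℝ),
    UnitMatrix A ∧ RowSupportLE A 2 ∧
    S = {x | ∀ i, b i ≤ ((∑ j, A i j * x j : ℤ) : ℝ)}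

/-- `S` is representable by an SVPI system. -/
def RepSVPI {n : ℕ} (S : Set (Fin n → ℤ)) : Prop :=
  ∃ (mR : ℕ) (A : Matrix (Fin mR) (Fin n) ℤ) (b : Fin mR → ℝ),
    UnitMatrix A ∧ RowSupportLE A 1 ∧
    S = {x | ∀ i, b i ≤ ((∑ j, A i j * x j : ℤ) : ℝ)}

/-- `S` is representable by a DC system. -/
def RepDC {n : ℕ} (S : Set (Fin n → ℤ)) : Prop :=
  ∃ (mR : ℕ) (A : Matrix (Fin mR) (Fin n) ℤ) (b : Fin mR → ℝ),
    UnitMatrix A ∧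
    (∀ i, {j | A i j = 1}.ncard ≤ 1) ∧ (∀ i, {j | A i j = -1}.ncard ≤ 1) ∧
    S = {x | ∀ i, b i ≤ ((∑ j, A i j * x j : ℤ) : ℝ)}

/-- `S` is representable by a TVPI system with possibly infinitely many inequalities. -/
def RepTVPIInf {n : ℕ} (S : Set (Fin n → ℤ)) : Prop :=
  ∃ (I : Type) (a1 a2 b : I → ℝ) (p q : I → Fin n),
    S = {x | ∀ i : I, b i ≤ a1 i * (x (p i) : ℝ) + a2 i * (x (q i) : ℝ)}

/-- `S` is 2-decomposable: `S = ⋈_{i<j} π_{i,j}(S)`. -/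
def TwoDecomposable {ι : Type*} [LinearOrder ι] (S : Set (ι → ℤ)) : Prop :=
  S = {x | ∀ i j : ι, i < j → ∃ s ∈ S, s i = x i ∧ s j = x j}

lemma s14_fc (s : ℤ) : ⌊((s:ℚ))/2⌋ + ⌈((s:ℚ))/2⌉ = s := by
  rcases Int.even_or_odd s with ⟨k, rfl⟩ | ⟨k, rfl⟩
  · push_cast
    rw [show ((k:ℚ)+k)/2 = (k:ℚ) by ring]
    simp
  · push_cast
    rw [show ((2*k+1:ℚ))/2 = (k:ℚ) + 1/2 by ring, Int.floor_intCast_add,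
      show (k:ℚ) + 1/2 = 1/2 + k by ring, Int.ceil_add_intCast]
    have h12 : ⌈(1/2:ℚ)⌉ = 1 := by
      rw [Int.ceil_eq_iff] <;> norm_num
    have h02 : ⌊(1/2:ℚ)⌋ = 0 := by
      rw [Int.floor_eq_iff] <;> norm_num
    omega

lemma s14_mu_eval (a b : ℤ) :
    muOp ![a,b] = if b ≤ a then ⌈((a+b:ℤ):ℚ)/2⌉ else ⌊((a+b:ℤ):ℚ)/2⌋ := by
  simp [muOp]

lemma s14_mu_add_rev (a b : ℤ) : muOp ![a,b] + muOp ![b,a] = a + b := by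
  rw [s14_mu_eval, s14_mu_eval]
  rcases lt_trichotomy a b with hab | rfl | hab
  · rw [if_neg (by omega), if_pos hab.le, show b + a = a + b by ring]
    exact s14_fc (a+b)
  · rw [if_pos le_rfl]
    have hA : ((a+a:ℤ):ℚ)/2 = (a:ℚ) := by push_cast; ring
    rw [hA, Int.ceil_intCast]
  · rw [if_pos hab.le, if_neg (by omega), show b + a = a + b by ring]
    have := s14_fc (a+b); omega

lemma s14_floor_half_bounds (a b : ℤ) :
    min a b ≤ ⌊((a+b:ℤ):ℚ)/2⌋ ∧ ⌊((a+b:ℤ):ℚ)/2⌋ ≤ max a b := by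
  rcases le_total a b with hab | hab
  · rw [min_eq_left hab, max_eq_right hab]
    have hab' : (a:ℚ) ≤ b := by exact_mod_cast hab
    constructor
    · rw [Int.le_floor]; push_cast; linarith
    · rw [Int.floor_le_iff]; push_cast; linarith
  · rw [min_eq_right hab, max_eq_left hab]
    have hab' : (b:ℚ) ≤ a := by exact_mod_cast hab
    constructor
    · rw [Int.le_floor]; push_cast; linarith
    · rw [Int.floor_le_iff]; push_cast; linarith

lemma s14_ceil_half_bounds (a b : ℤ) :
    min a b ≤ ⌈((a+b:ℤ):ℚ)/2⌉ ∧ ⌈((a+b:ℤ):ℚ)/2⌉ ≤ max a b := by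
  rcases le_total a b with hab | hab
  · rw [min_eq_left hab, max_eq_right hab]
    have hab' : (a:ℚ) ≤ b := by exact_mod_cast hab
    constructor
    · rw [Int.le_ceil_iff]; push_cast; linarith
    · rw [Int.ceil_le]; push_cast; linarith
  · rw [min_eq_right hab, max_eq_left hab]
    have hab' : (b:ℚ) ≤ a := by exact_mod_cast hab
    constructor
    · rw [Int.le_ceil_iff]; push_cast; linarith
    · rw [Int.ceil_le]; push_cast; linarith

lemma s14_mu_bounds (a b : ℤ) : min a b ≤ muOp ![a,b] ∧ muOp ![a,b] ≤ max a b := by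
  rw [s14_mu_eval]
  split
  · exact s14_ceil_half_bounds a b
  · exact s14_floor_half_bounds a b

lemma s14_mu_strict {a b : ℤ} (h2 : 2 ≤ |a - b|) :
    min a b < muOp ![a,b] ∧ muOp ![a,b] < max a b := by
  have hstrict : min a b + 1 ≤ ⌊((a+b:ℤ):ℚ)/2⌋ ∧ ⌈((a+b:ℤ):ℚ)/2⌉ ≤ max a b - 1 := by
    rcases le_total a b with hab | hab
    · have h2' : a + 2 ≤ b := by rcases abs_cases (a-b) with ⟨he,_⟩|⟨he,_⟩ <;> omega
      rw [min_eq_left hab, max_eq_right hab]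
      have h2'' : (a:ℚ) + 2 ≤ b := by exact_mod_cast h2'
      constructor
      · rw [Int.le_floor]; push_cast; linarith
      · rw [Int.ceil_le]; push_cast; linarith
    · have h2' : b + 2 ≤ a := by rcases abs_cases (a-b) with ⟨he,_⟩|⟨he,_⟩ <;> omega
      rw [min_eq_right hab, max_eq_left hab]
      have h2'' : (b:ℚ) + 2 ≤ a := by exact_mod_cast h2'
      constructor
      · rw [Int.le_floor]; push_cast; linarith
      · rw [Int.ceil_le]; push_cast; linarith
  have hfc := Int.floor_le_ceil (((a+b:ℤ):ℚ)/2)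
  rw [s14_mu_eval]
  split <;> omega

lemma s14_mu_diff (a b : ℤ) :
    |muOp ![a,b] - muOp ![b,a]| ≤ 1 ∧ |muOp ![a,b] - muOp ![b,a]| ≤ |a - b| := by
  rcases eq_or_ne a b with rfl | hne
  · simp
  · have h1 : (1:ℤ) ≤ |a - b| := by
      rcases abs_cases (a-b) with ⟨he,_⟩|⟨he,_⟩ <;> omega
    have hfc := Int.floor_le_ceil (((a+b:ℤ):ℚ)/2)
    have hcf := Int.ceil_le_floor_add_one (((a+b:ℤ):ℚ)/2)
    have key : |muOp ![a,b] - muOp ![b,a]| ≤ 1 := by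
      rw [s14_mu_eval, s14_mu_eval, show b + a = a + b by ring]
      rcases le_or_gt b a with hba | hba
      · rw [if_pos hba, if_neg (by omega)]
        rw [abs_le]; omega
      · rw [if_neg (by omega), if_pos hba.le]
        rw [abs_le]; omega
    exact ⟨key, le_trans key h1⟩

lemma s14_quad_id (x a b u v : ℝ) (h : u + v = a + b) :
    (u - x)^2 + (v - x)^2 - (a - x)^2 - (b - x)^2 = ((u - v)^2 - (a - b)^2)/2 := by
  have hv : v = a + b - u := by linarith
  subst hv; ring

lemma s14_exchange {n : ℕ} (P : Finset (Fin n → ℤ)) (x : Fin n → ℝ)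
    (hP : ∀ p ∈ P, ∀ q ∈ P, (fun i => muOp ![p i, q i]) ∈ P)
    (w : (Fin n → ℤ) → ℝ) (hw0 : ∀ p, 0 ≤ w p) (hsupp : ∀ p ∉ P, w p = 0)
    (hw1 : ∑ p ∈ P, w p = 1) (hxm : ∀ j, ∑ p ∈ P, w p * (p j : ℝ) = x j)
    (p₀ : Fin n → ℤ) (hp₀ : p₀ ∈ P) (hwp₀ : 0 < w p₀)
    (j₀ : Fin n) (hfar : 1 ≤ |(p₀ j₀ : ℝ) - x j₀|) :
    ∃ w' : (Fin n → ℤ) → ℝ, (∀ p, 0 ≤ w' p) ∧ (∀ p ∉ P, w' p = 0) ∧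
      (∑ p ∈ P, w' p = 1) ∧ (∀ j, ∑ p ∈ P, w' p * (p j : ℝ) = x j) ∧
      (∑ p ∈ P, w' p * (∑ j, ((p j : ℝ) - x j)^2)) <
        (∑ p ∈ P, w p * (∑ j, ((p j : ℝ) - x j)^2)) := by
  classical
  have hzero : ∑ p ∈ P, w p * ((p j₀ : ℝ) - x j₀) = 0 := by
    have hh : ∑ p ∈ P, w p * ((p j₀ : ℝ) - x j₀)
        = (∑ p ∈ P, w p * (p j₀ : ℝ)) - (∑ p ∈ P, w p) * x j₀ := by
      rw [Finset.sum_mul, ← Finset.sum_sub_distrib]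
      congr 1; funext p; ring
    rw [hh, hxm j₀, hw1]; ring
  have hq : ∃ q₀ ∈ P, 0 < w q₀ ∧ 2 ≤ |p₀ j₀ - q₀ j₀| := by
    rcases le_or_gt (x j₀) (p₀ j₀ : ℝ) with hside | hside
    · rw [abs_of_nonneg (by linarith)] at hfar
      have hq' : ∃ q₀ ∈ P, 0 < w q₀ ∧ (q₀ j₀ : ℝ) < x j₀ := by
        by_contra hcon
        push_neg at hcon
        have hterm : ∀ p ∈ P, 0 ≤ w p * ((p j₀ : ℝ) - x j₀) := by
          intro p hp
          rcases eq_or_lt_of_le (hw0 p) with he | hpos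
          · rw [← he]; simp
          · exact mul_nonneg hpos.le (by linarith [hcon p hp hpos])
        have hge := Finset.single_le_sum hterm hp₀
        have hpos2 : 0 < w p₀ * ((p₀ j₀ : ℝ) - x j₀) := mul_pos hwp₀ (by linarith)
        rw [hzero] at hge
        linarith
      obtain ⟨q₀, hq₀P, hwq₀, hqlt⟩ := hq'
      refine ⟨q₀, hq₀P, hwq₀, ?_⟩
      have h1 : (q₀ j₀ : ℝ) + 1 < (p₀ j₀ : ℝ) := by linarith
      have h2 : q₀ j₀ + 1 < p₀ j₀ := by exact_mod_cast h1
      have h3 : 2 ≤ p₀ j₀ - q₀ j₀ := by omega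
      exact le_trans h3 (le_abs_self _)
    · rw [abs_of_neg (by linarith)] at hfar
      have hq' : ∃ q₀ ∈ P, 0 < w q₀ ∧ x j₀ < (q₀ j₀ : ℝ) := by
        by_contra hcon
        push_neg at hcon
        have hterm : ∀ p ∈ P, 0 ≤ -(w p * ((p j₀ : ℝ) - x j₀)) := by
          intro p hp
          rcases eq_or_lt_of_le (hw0 p) with he | hpos
          · rw [← he]; simp
          · have := hcon p hp hpos
            have h5 : w p * ((p j₀ : ℝ) - x j₀) ≤ 0 :=
              mul_nonpos_of_nonneg_of_nonpos hpos.le (by linarith)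
            linarith
        have hge := Finset.single_le_sum hterm hp₀
        rw [Finset.sum_neg_distrib, hzero, neg_zero] at hge
        have hpos2 : 0 < w p₀ * (x j₀ - (p₀ j₀ : ℝ)) := mul_pos hwp₀ (by linarith)
        nlinarith
      obtain ⟨q₀, hq₀P, hwq₀, hqlt⟩ := hq'
      refine ⟨q₀, hq₀P, hwq₀, ?_⟩
      have h1 : (p₀ j₀ : ℝ) + 1 < (q₀ j₀ : ℝ) := by linarith
      have h2 : p₀ j₀ + 1 < q₀ j₀ := by exact_mod_cast h1
      have h3 : 2 ≤ q₀ j₀ - p₀ j₀ := by omega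
      rw [abs_sub_comm]
      exact le_trans h3 (le_abs_self _)
  obtain ⟨q₀, hq₀P, hwq₀, hdist⟩ := hq
  set m1 : Fin n → ℤ := fun i => muOp ![p₀ i, q₀ i] with hm1def
  set m2 : Fin n → ℤ := fun i => muOp ![q₀ i, p₀ i] with hm2def
  have em1 : ∀ j, m1 j = muOp ![p₀ j, q₀ j] := fun j => by rw [hm1def]
  have em2 : ∀ j, m2 j = muOp ![q₀ j, p₀ j] := fun j => by rw [hm2def]
  have hm1P : m1 ∈ P := hP _ hp₀ _ hq₀P
  have hm2P : m2 ∈ P := hP _ hq₀P _ hp₀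
  have hadd : ∀ i, m1 i + m2 i = p₀ i + q₀ i := by
    intro i; rw [em1 i, em2 i]; exact s14_mu_add_rev _ _
  have hdist' : 2 ≤ |q₀ j₀ - p₀ j₀| := by rw [abs_sub_comm]; exact hdist
  have hs1 : min (p₀ j₀) (q₀ j₀) < m1 j₀ ∧ m1 j₀ < max (p₀ j₀) (q₀ j₀) := by
    rw [em1 j₀]; exact s14_mu_strict hdist
  have hs2 : min (q₀ j₀) (p₀ j₀) < m2 j₀ ∧ m2 j₀ < max (q₀ j₀) (p₀ j₀) := by
    rw [em2 j₀]; exact s14_mu_strict hdist'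
  rw [min_comm, max_comm] at hs2
  have hne_pq : p₀ ≠ q₀ := by
    intro he
    rw [he, sub_self, abs_zero] at hdist
    omega
  have hneval : ∀ c : ℤ, min (p₀ j₀) (q₀ j₀) < c → c < max (p₀ j₀) (q₀ j₀) →
      c ≠ p₀ j₀ ∧ c ≠ q₀ j₀ := by
    intro c h1 h2
    rcases le_total (p₀ j₀) (q₀ j₀) with hh | hh
    · rw [min_eq_left hh] at h1; rw [max_eq_right hh] at h2; omega
    · rw [min_eq_right hh] at h1; rw [max_eq_left hh] at h2; omega
  have hj1 := hneval _ hs1.1 hs1.2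
  have hj2 := hneval _ hs2.1 hs2.2
  have hm1p : m1 ≠ p₀ := fun he => hj1.1 (congrFun he j₀)
  have hm1q : m1 ≠ q₀ := fun he => hj1.2 (congrFun he j₀)
  have hm2p : m2 ≠ p₀ := fun he => hj2.1 (congrFun he j₀)
  have hm2q : m2 ≠ q₀ := fun he => hj2.2 (congrFun he j₀)
  set ε : ℝ := min (w p₀) (w q₀) with hεdef
  have hε : 0 < ε := lt_min hwp₀ hwq₀
  have hεp : ε ≤ w p₀ := min_le_left _ _
  have hεq : ε ≤ w q₀ := min_le_right _ _
  set c : (Fin n → ℤ) → ℝ := fun p =>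
    (if p = m1 then 1 else 0) + (if p = m2 then 1 else 0)
      - (if p = p₀ then 1 else 0) - (if p = q₀ then 1 else 0) with hcdef
  have hcval : ∀ p, c p = (if p = m1 then 1 else 0) + (if p = m2 then 1 else 0)
      - (if p = p₀ then 1 else 0) - (if p = q₀ then 1 else 0) := fun p => by rw [hcdef]
  have hsum : ∀ f : (Fin n → ℤ) → ℝ,
      ∑ p ∈ P, (w p + ε * c p) * f p
        = (∑ p ∈ P, w p * f p) + ε * (f m1 + f m2 - f p₀ - f q₀) := by
    intro f
    have hpt : ∀ p, (w p + ε * c p) * f p = w p * f p + ε *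
        ((if p = m1 then f p else 0) + (if p = m2 then f p else 0)
          - (if p = p₀ then f p else 0) - (if p = q₀ then f p else 0)) := by
      intro p
      have h0 : (w p + ε * c p) * f p = w p * f p + ε * (c p * f p) := by ring
      rw [h0]
      congr 1
      congr 1
      rw [hcval p]
      simp only [add_mul, sub_mul, ite_mul, one_mul, zero_mul]
    rw [Finset.sum_congr rfl (fun p _ => hpt p)]
    rw [Finset.sum_add_distrib, ← Finset.mul_sum]
    congr 2
    rw [Finset.sum_sub_distrib, Finset.sum_sub_distrib, Finset.sum_add_distrib,
      Finset.sum_ite_eq' P m1, Finset.sum_ite_eq' P m2, Finset.sum_ite_eq' P p₀,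
      Finset.sum_ite_eq' P q₀, if_pos hm1P, if_pos hm2P, if_pos hp₀, if_pos hq₀P]
  refine ⟨fun p => w p + ε * c p, ?_, ?_, ?_, ?_, ?_⟩
  · intro p
    by_cases h3 : p = p₀
    · subst h3
      have hc : c p = -1 := by
        rw [hcval p, if_neg (Ne.symm hm1p), if_neg (Ne.symm hm2p), if_pos rfl,
          if_neg hne_pq]
        norm_num
      show 0 ≤ w p + ε * c p
      rw [hc]; linarith
    · by_cases h4 : p = q₀
      · subst h4
        have hc : c p = -1 := by
          rw [hcval p, if_neg (Ne.symm hm1q), if_neg (Ne.symm hm2q),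
            if_neg (Ne.symm hne_pq), if_pos rfl]
          norm_num
        show 0 ≤ w p + ε * c p
        rw [hc]; linarith
      · have hc : 0 ≤ c p := by
          rw [hcval p, if_neg h3, if_neg h4]
          have i1 : (0:ℝ) ≤ (if p = m1 then (1:ℝ) else 0) := by split <;> norm_num
          have i2 : (0:ℝ) ≤ (if p = m2 then (1:ℝ) else 0) := by split <;> norm_num
          linarith
        exact add_nonneg (hw0 p) (mul_nonneg hε.le hc)
  · intro p hp
    have hc : c p = 0 := by
      rw [hcval p, if_neg (fun he => hp (by rw [he]; exact hm1P)),
        if_neg (fun he => hp (by rw [he]; exact hm2P)),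
        if_neg (fun he => hp (by rw [he]; exact hp₀)),
        if_neg (fun he => hp (by rw [he]; exact hq₀P))]
      norm_num
    show w p + ε * c p = 0
    rw [hsupp p hp, hc]; ring
  · have h1 := hsum (fun _ => 1)
    simp only [mul_one] at h1
    rw [h1, hw1]; ring
  · intro j
    have h1 := hsum (fun p => (p j : ℝ))
    rw [h1, hxm j]
    have hz : (m1 j + m2 j : ℤ) = p₀ j + q₀ j := hadd j
    have hz' : ((m1 j : ℝ)) + (m2 j : ℝ) = (p₀ j : ℝ) + (q₀ j : ℝ) := by exact_mod_cast hz
    have hb : ((m1 j : ℝ)) + (m2 j : ℝ) - (p₀ j : ℝ) - (q₀ j : ℝ) = 0 := by linarith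
    rw [hb, mul_zero, add_zero]
  · have h1 := hsum (fun p => ∑ j, ((p j : ℝ) - x j)^2)
    rw [h1]
    have hterm : ∀ j : Fin n, ((m1 j : ℝ) - x j)^2 + ((m2 j : ℝ) - x j)^2
        - ((p₀ j : ℝ) - x j)^2 - ((q₀ j : ℝ) - x j)^2
        = (((m1 j : ℝ) - (m2 j : ℝ))^2 - ((p₀ j : ℝ) - (q₀ j : ℝ))^2)/2 := by
      intro j
      apply s14_quad_id
      exact_mod_cast hadd j
    have hdiff_le : ∀ j : Fin n, (m1 j - m2 j)^2 ≤ (p₀ j - q₀ j)^2 := by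
      intro j
      have hd : |m1 j - m2 j| ≤ |p₀ j - q₀ j| := by
        rw [em1 j, em2 j]
        exact (s14_mu_diff (p₀ j) (q₀ j)).2
      nlinarith [sq_abs (m1 j - m2 j), sq_abs (p₀ j - q₀ j),
        abs_nonneg (m1 j - m2 j), abs_nonneg (p₀ j - q₀ j)]
    have hkey : (∑ j, ((m1 j : ℝ) - x j)^2) + (∑ j, ((m2 j : ℝ) - x j)^2)
        - (∑ j, ((p₀ j : ℝ) - x j)^2) - (∑ j, ((q₀ j : ℝ) - x j)^2) < 0 := by
      have hsplit : ∑ j : Fin n, (((m1 j : ℝ) - x j)^2 + ((m2 j : ℝ) - x j)^2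
          - ((p₀ j : ℝ) - x j)^2 - ((q₀ j : ℝ) - x j)^2)
          = (∑ j, ((m1 j : ℝ) - x j)^2) + (∑ j, ((m2 j : ℝ) - x j)^2)
            - (∑ j, ((p₀ j : ℝ) - x j)^2) - (∑ j, ((q₀ j : ℝ) - x j)^2) := by
        rw [Finset.sum_sub_distrib, Finset.sum_sub_distrib, Finset.sum_add_distrib]
      rw [← hsplit]
      have hlt : ∑ j : Fin n, (((m1 j : ℝ) - x j)^2 + ((m2 j : ℝ) - x j)^2
          - ((p₀ j : ℝ) - x j)^2 - ((q₀ j : ℝ) - x j)^2) < ∑ _j : Fin n, (0:ℝ) := by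
        apply Finset.sum_lt_sum
        · intro j _
          rw [hterm j]
          have h1' : ((m1 j : ℝ) - (m2 j : ℝ))^2 ≤ ((p₀ j : ℝ) - (q₀ j : ℝ))^2 := by
            have := hdiff_le j
            have hc2 : ((m1 j - m2 j : ℤ) : ℝ)^2 ≤ ((p₀ j - q₀ j : ℤ) : ℝ)^2 := by
              exact_mod_cast this
            push_cast at hc2
            linarith
          linarith
        · refine ⟨j₀, Finset.mem_univ _, ?_⟩
          rw [hterm j₀]
          have hd1 : (m1 j₀ - m2 j₀)^2 ≤ 1 := by
            have hd := (s14_mu_diff (p₀ j₀) (q₀ j₀)).1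
            rw [← em1 j₀, ← em2 j₀] at hd
            nlinarith [sq_abs (m1 j₀ - m2 j₀), abs_nonneg (m1 j₀ - m2 j₀)]
          have hd2 : 4 ≤ (p₀ j₀ - q₀ j₀)^2 := by
            nlinarith [sq_abs (p₀ j₀ - q₀ j₀), abs_nonneg (p₀ j₀ - q₀ j₀)]
          have hd1' : ((m1 j₀ : ℝ) - (m2 j₀ : ℝ))^2 ≤ 1 := by
            have : ((m1 j₀ - m2 j₀ : ℤ) : ℝ)^2 ≤ 1 := by exact_mod_cast hd1
            push_cast at this
            linarith
          have hd2' : 4 ≤ ((p₀ j₀ : ℝ) - (q₀ j₀ : ℝ))^2 := by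
            have : (4:ℝ) ≤ ((p₀ j₀ - q₀ j₀ : ℤ) : ℝ)^2 := by exact_mod_cast hd2
            push_cast at this
            linarith
          linarith
      simpa using hlt
    have hmul := mul_neg_of_pos_of_neg hε hkey
    linarith

/-- if `S` is closed under the directed discrete midpoint operation
`μ`, then `S` is integrally convex. -/
theorem stmt_14 {n : ℕ} (S : Set (Fin n → ℤ)) (h : CptClosed muOp S) :
    IntegrallyConvex S := by
  classical
  intro x hx
  have htoR : Function.Injective (toR (m := n)) := by
    intro a b hab
    funext j
    have h1 := congrFun hab j
    simp only [toR] at h1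
    exact_mod_cast h1
  rw [convexHull_eq_union_convexHull_finite_subsets] at hx
  simp only [Set.mem_iUnion] at hx
  obtain ⟨t', ht'sub, hxt'⟩ := hx
  rw [Finset.mem_convexHull] at hxt'
  obtain ⟨v, hv0, hv1, hvc⟩ := hxt'
  set t : Finset (Fin n → ℤ) := t'.preimage toR (htoR.injOn) with htdef
  have hmem : ∀ z : Fin n → ℤ, z ∈ t ↔ toR z ∈ t' := fun z => Finset.mem_preimage
  have htS : ∀ z ∈ t, z ∈ S := by
    intro z hz
    obtain ⟨z', hz'S, hz'e⟩ := ht'sub ((hmem z).1 hz)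
    rwa [← htoR hz'e]
  have hrange : ∀ y ∈ t', y ∈ Set.range (toR (m := n)) := by
    intro y hy
    obtain ⟨z, _, rfl⟩ := ht'sub hy
    exact ⟨z, rfl⟩
  have hsumt : ∀ g : (Fin n → ℝ) → ℝ, ∑ z ∈ t, g (toR z) = ∑ y ∈ t', g y := by
    intro g
    exact Finset.sum_preimage toR t' htoR.injOn g
      (fun y hy hyr => absurd (hrange y hy) hyr)
  have htne : t.Nonempty := by
    have ht'ne : t'.Nonempty := by
      by_contra hne
      rw [Finset.not_nonempty_iff_eq_empty] at hne
      rw [hne] at hv1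
      simp at hv1
    obtain ⟨y, hy⟩ := ht'ne
    obtain ⟨z, _, rfl⟩ := ht'sub hy
    exact ⟨z, (hmem z).2 hy⟩
  set lo : Fin n → ℤ := fun j => t.inf' htne (fun z => z j) with hlodef
  set hi : Fin n → ℤ := fun j => t.sup' htne (fun z => z j) with hhidef
  set P : Finset (Fin n → ℤ) := (Finset.Icc lo hi).filter (· ∈ S) with hPdef
  have hPS : ∀ p ∈ P, p ∈ S := fun p hp => (Finset.mem_filter.1 hp).2
  have hPIcc : ∀ p ∈ P, ∀ j, lo j ≤ p j ∧ p j ≤ hi j := by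
    intro p hp j
    have h1 := (Finset.mem_filter.1 hp).1
    rw [Finset.mem_Icc] at h1
    exact ⟨h1.1 j, h1.2 j⟩
  have hPmem : ∀ p : Fin n → ℤ, p ∈ S → (∀ j, lo j ≤ p j ∧ p j ≤ hi j) → p ∈ P := by
    intro p h1 h2
    rw [hPdef, Finset.mem_filter, Finset.mem_Icc]
    exact ⟨⟨fun j => (h2 j).1, fun j => (h2 j).2⟩, h1⟩
  have htP : ∀ z ∈ t, z ∈ P := by
    intro z hz
    refine hPmem z (htS z hz) (fun j => ⟨?_, ?_⟩)
    · rw [hlodef]; exact Finset.inf'_le (fun z => z j) hz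
    · rw [hhidef]; exact Finset.le_sup' (fun z => z j) hz
  have hPmu : ∀ p ∈ P, ∀ q ∈ P, (fun i => muOp ![p i, q i]) ∈ P := by
    intro p hp q hq
    have hmem' : (fun i => muOp ![p i, q i]) ∈ S := by
      have h2 := h ![p, q] (by
        intro l
        fin_cases l
        · simpa using hPS p hp
        · simpa using hPS q hq)
      have he : (fun i => muOp (fun l => ![p, q] l i)) = (fun i => muOp ![p i, q i]) := by
        funext i
        congr 1
        funext l
        fin_cases l <;> rfl
      rwa [he] at h2
    refine hPmem _ hmem' (fun j => ?_)
    have hb := s14_mu_bounds (p j) (q j)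
    have h1 := hPIcc p hp j
    have h2 := hPIcc q hq j
    constructor
    · calc lo j ≤ min (p j) (q j) := le_min h1.1 h2.1
        _ ≤ muOp ![p j, q j] := hb.1
    · calc muOp ![p j, q j] ≤ max (p j) (q j) := hb.2
        _ ≤ hi j := max_le h1.2 h2.2
  set K : Set ((Fin n → ℤ) → ℝ) := {w | (∀ p, 0 ≤ w p) ∧ (∀ p ∉ P, w p = 0) ∧
    (∑ p ∈ P, w p = 1) ∧ (∀ j, ∑ p ∈ P, w p * (p j : ℝ) = x j)} with hKdef
  have htsubP : t ⊆ P := fun z hz => htP z hz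
  have hKne : K.Nonempty := by
    refine ⟨fun z => if z ∈ t then v (toR z) else 0, ?_, ?_, ?_, ?_⟩
    · intro p
      show (0:ℝ) ≤ if p ∈ t then v (toR p) else 0
      by_cases hp : p ∈ t
      · rw [if_pos hp]; exact hv0 _ ((hmem p).1 hp)
      · rw [if_neg hp]
    · intro p hp
      show (if p ∈ t then v (toR p) else 0) = 0
      rw [if_neg (fun hc => hp (htP p hc))]
    · rw [Finset.sum_ite_mem, Finset.inter_eq_right.2 htsubP, hsumt v, hv1]
    · intro j
      have e1 : ∑ p ∈ P, (if p ∈ t then v (toR p) else 0) * (p j : ℝ)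
          = ∑ p ∈ P, (if p ∈ t then v (toR p) * (p j : ℝ) else 0) :=
        Finset.sum_congr rfl (fun p _ => by split <;> ring)
      rw [e1, Finset.sum_ite_mem, Finset.inter_eq_right.2 htsubP]
      have e3 : ∑ i ∈ t, v (toR i) * ((i j : ℤ) : ℝ)
          = ∑ i ∈ t, (fun y : Fin n → ℝ => v y * y j) (toR i) :=
        Finset.sum_congr rfl (fun i _ => rfl)
      rw [e3, hsumt (fun y => v y * y j)]
      have h2 := congrFun hvc j
      simp only [Finset.centerMass, hv1, inv_one, one_smul] at h2
      rw [← h2, Finset.sum_apply]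
      exact Finset.sum_congr rfl (fun y _ => by simp [smul_eq_mul])
  have hsub01 : K ⊆ Set.Icc (0 : (Fin n → ℤ) → ℝ) 1 := by
    rintro w ⟨h1, h2, h3, _⟩
    constructor
    · intro p; simpa using h1 p
    · intro p
      show w p ≤ (1 : (Fin n → ℤ) → ℝ) p
      simp only [Pi.one_apply]
      by_cases hp : p ∈ P
      · have h4 := Finset.single_le_sum (f := w) (fun q _ => h1 q) hp
        rw [h3] at h4
        exact h4
      · rw [h2 p hp]; norm_num
  have hKclosed : IsClosed K := by
    have e : K = ({w : (Fin n → ℤ) → ℝ | ∀ p, 0 ≤ w p} ∩ {w | ∀ p, p ∉ P → w p = 0}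
        ∩ {w | ∑ p ∈ P, w p = 1} ∩ {w | ∀ j, ∑ p ∈ P, w p * (p j : ℝ) = x j}) := by
      ext w
      simp only [hKdef, Set.mem_setOf_eq, Set.mem_inter_iff]
      tauto
    rw [e]
    refine ((IsClosed.inter (IsClosed.inter ?_ ?_) ?_).inter ?_)
    · rw [Set.setOf_forall]
      exact isClosed_iInter fun p => isClosed_le continuous_const (continuous_apply p)
    · rw [Set.setOf_forall]
      refine isClosed_iInter fun p => ?_
      by_cases hp : p ∈ P
      · have e2 : {w : (Fin n → ℤ) → ℝ | p ∉ P → w p = 0} = Set.univ := by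
          ext w; simp [hp]
        rw [e2]; exact isClosed_univ
      · have e2 : {w : (Fin n → ℤ) → ℝ | p ∉ P → w p = 0} = {w | w p = 0} := by
          ext w; simp [hp]
        rw [e2]
        exact isClosed_eq (continuous_apply p) continuous_const
    · exact isClosed_eq (continuous_finset_sum _ fun p _ => continuous_apply p)
        continuous_const
    · rw [Set.setOf_forall]
      exact isClosed_iInter fun j => isClosed_eq
        (continuous_finset_sum _ fun p _ => (continuous_apply p).mul continuous_const)
        continuous_const
  have hKcompact : IsCompact K :=
    isCompact_Icc.of_isClosed_subset hKclosed hsub01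
  have hΦc : Continuous (fun w : (Fin n → ℤ) → ℝ =>
      ∑ p ∈ P, w p * (∑ j, ((p j : ℝ) - x j)^2)) :=
    continuous_finset_sum _ fun p _ => (continuous_apply p).mul continuous_const
  obtain ⟨w, hwK, hwmin⟩ := hKcompact.exists_isMinOn hKne hΦc.continuousOn
  obtain ⟨hw0, hwsupp, hw1, hwx⟩ := hwK
  have hnb : ∀ p ∈ P, 0 < w p → ∀ j, |(p j : ℝ) - x j| < 1 := by
    intro p hp hwp j
    by_contra hge
    push_neg at hge
    obtain ⟨w', h1, h2, h3, h4, h5⟩ :=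
      s14_exchange P x hPmu w hw0 hwsupp hw1 hwx p hp hwp j hge
    have hin : w' ∈ K := ⟨h1, h2, h3, h4⟩
    have hle := hwmin hin
    simp only at hle
    exact absurd h5 (not_lt.2 hle)
  set T : Finset (Fin n → ℤ) := P.filter (fun p => 0 < w p) with hTdef
  have hT1 : ∑ p ∈ T, w p = 1 := by
    rw [hTdef, Finset.sum_filter_of_ne, hw1]
    intro p hp hne
    rcases eq_or_lt_of_le (hw0 p) with he | hlt
    · exact absurd he.symm hne
    · exact hlt
  have hsumT : ∀ j, ∑ p ∈ T, w p * (p j : ℝ) = x j := by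
    intro j
    rw [hTdef, Finset.sum_filter_of_ne, hwx j]
    intro p hp hne
    rcases eq_or_lt_of_le (hw0 p) with he | hlt
    · exfalso; apply hne; rw [← he]; ring
    · exact hlt
  have hcm : T.centerMass w toR ∈ convexHull ℝ (toR '' (S ∩ intNbhd x)) := by
    apply Finset.centerMass_mem_convexHull
    · intro p _; exact hw0 p
    · rw [hT1]; norm_num
    · intro p hp
      rw [hTdef, Finset.mem_filter] at hp
      exact ⟨p, ⟨hPS p hp.1, fun j => hnb p hp.1 hp.2 j⟩, rfl⟩
  have hcmx : T.centerMass w toR = x := by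
    rw [Finset.centerMass, hT1, inv_one, one_smul]
    funext j
    rw [Finset.sum_apply]
    have e2 : ∑ p ∈ T, (w p • toR p) j = ∑ p ∈ T, w p * (p j : ℝ) :=
      Finset.sum_congr rfl (fun p _ => by simp [toR, smul_eq_mul])
    rw [e2, hsumT j]
  rwa [hcmx] at hcm
end

section
/- Let n ≥ 2 and S ⊆ ℤ^n. Then S is representable by a UTVPI system if and only if S is closed under the directed discrete midpoint operation μ and under the median operation. -/
/-! ### Auxiliary development for stmt_15 -/

/-- binary version of μ -/
def mu2 (s t : ℤ) : ℤ := muOp ![s, t]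

def med3 (x y z : ℤ) : ℤ := medianOp ![x, y, z]

lemma muOp_eq (t : Fin 2 → ℤ) : muOp t = mu2 (t 0) (t 1) := by
  simp [mu2, muOp]

lemma medianOp_eq (t : Fin 3 → ℤ) : medianOp t = med3 (t 0) (t 1) (t 2) := by
  simp [med3, medianOp]

lemma med3_def (x y z : ℤ) :
    med3 x y z = max (max (min x y) (min y z)) (min x z) := by
  simp [med3, medianOp]

lemma ceil_half_spec (a : ℤ) : a ≤ 2 * ⌈((a : ℤ) : ℚ) / 2⌉ ∧ 2 * ⌈((a : ℤ) : ℚ) / 2⌉ ≤ a + 1 := by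
  constructor
  · have h := Int.le_ceil (((a : ℤ) : ℚ) / 2)
    have : ((a : ℚ)) / 2 ≤ (⌈((a : ℤ) : ℚ) / 2⌉ : ℚ) := h
    have h2 : ((a : ℚ)) ≤ 2 * (⌈((a : ℤ) : ℚ) / 2⌉ : ℚ) := by linarith
    exact_mod_cast h2
  · have h := Int.ceil_lt_add_one (((a : ℤ) : ℚ) / 2)
    have h2 : (⌈((a : ℤ) : ℚ) / 2⌉ : ℚ) < (a : ℚ) / 2 + 1 := h
    have h3 : 2 * (⌈((a : ℤ) : ℚ) / 2⌉ : ℚ) < (a : ℚ) + 2 := by linarith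
    have h4 : 2 * ⌈((a : ℤ) : ℚ) / 2⌉ < a + 2 := by exact_mod_cast h3
    omega

lemma floor_half_spec (a : ℤ) : a - 1 ≤ 2 * ⌊((a : ℤ) : ℚ) / 2⌋ ∧ 2 * ⌊((a : ℤ) : ℚ) / 2⌋ ≤ a := by
  constructor
  · have h := Int.sub_one_lt_floor (((a : ℤ) : ℚ) / 2)
    have h2 : ((a : ℚ)) / 2 - 1 < (⌊((a : ℤ) : ℚ) / 2⌋ : ℚ) := h
    have h3 : (a : ℚ) - 2 < 2 * (⌊((a : ℤ) : ℚ) / 2⌋ : ℚ) := by linarith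
    have h4 : a - 2 < 2 * ⌊((a : ℤ) : ℚ) / 2⌋ := by exact_mod_cast h3
    omega
  · have h := Int.floor_le (((a : ℤ) : ℚ) / 2)
    have h2 : 2 * (⌊((a : ℤ) : ℚ) / 2⌋ : ℚ) ≤ (a : ℚ) := by linarith
    exact_mod_cast h2

/-- Main spec for mu2: either the "ceil" case with `t ≤ s`, or the "floor" case with `s < t`. -/
lemma mu2_spec (s t : ℤ) :
    (t ≤ s ∧ s + t ≤ 2 * mu2 s t ∧ 2 * mu2 s t ≤ s + t + 1) ∨
    (s < t ∧ s + t - 1 ≤ 2 * mu2 s t ∧ 2 * mu2 s t ≤ s + t) := by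
  unfold mu2 muOp
  simp only [Matrix.cons_val_one, Matrix.head_cons, Matrix.cons_val_zero]
  by_cases h : t ≤ s
  · left
    simp only [h, ↓reduceIte]
    exact ⟨trivial, (ceil_half_spec (s + t)).1, (ceil_half_spec (s + t)).2⟩
  · right
    simp only [h, ↓reduceIte]
    exact ⟨by omega, (floor_half_spec (s + t)).1, (floor_half_spec (s + t)).2⟩

lemma mu2_self (s : ℤ) : mu2 s s = s := by have := mu2_spec s s; omega

lemma mu2_between (s t : ℤ) : min s t ≤ mu2 s t ∧ mu2 s t ≤ max s t := by
  have := mu2_spec s t; omega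

lemma mu2_add_const (s t c : ℤ) : mu2 (s + c) (t + c) = mu2 s t + c := by
  have h1 := mu2_spec (s + c) (t + c); have h2 := mu2_spec s t; omega

lemma mu2_neg (s t : ℤ) : mu2 (-s) (-t) = -mu2 s t := by
  have h1 := mu2_spec (-s) (-t); have h2 := mu2_spec s t; omega

/-- Key scalar lemma: a unit combination of directed midpoints is at least the
minimum of the combinations at the endpoints. -/
lemma mu2_pair_min (c d s1 t1 s2 t2 : ℤ) (hc : c = 1 ∨ c = -1) (hd : d = 1 ∨ d = -1) :
    c * s1 + d * s2 ≤ c * mu2 s1 t1 + d * mu2 s2 t2 ∨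
    c * t1 + d * t2 ≤ c * mu2 s1 t1 + d * mu2 s2 t2 := by
  have h1 := mu2_spec s1 t1; have h2 := mu2_spec s2 t2
  rcases hc with rfl | rfl <;> rcases hd with rfl | rfl <;> omega

lemma mu2_pair_max (c d s1 t1 s2 t2 : ℤ) (hc : c = 1 ∨ c = -1) (hd : d = 1 ∨ d = -1) :
    c * mu2 s1 t1 + d * mu2 s2 t2 ≤ c * s1 + d * s2 ∨
    c * mu2 s1 t1 + d * mu2 s2 t2 ≤ c * t1 + d * t2 := by
  have h1 := mu2_spec s1 t1; have h2 := mu2_spec s2 t2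
  rcases hc with rfl | rfl <;> rcases hd with rfl | rfl <;> omega

lemma mu2_single_min (c s t : ℤ) (hc : c = 1 ∨ c = -1) :
    c * s ≤ c * mu2 s t ∨ c * t ≤ c * mu2 s t := by
  have h1 := mu2_spec s t; rcases hc with rfl | rfl <;> omega

-- exact values needed in 2D arguments
lemma mu2_succ (k : ℤ) : mu2 k (k + 1) = k := by have := mu2_spec k (k+1); omega
lemma mu2_pred (k : ℤ) : mu2 k (k - 1) = k := by have := mu2_spec k (k-1); omega



lemma med3_single_min (c x y z : ℤ) (hc : c = 1 ∨ c = -1) :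
    c * x ≤ c * med3 x y z ∨ c * y ≤ c * med3 x y z ∨ c * z ≤ c * med3 x y z := by
  rw [med3_def]; rcases hc with rfl | rfl <;> omega

lemma med3_pair_min (c d x1 y1 z1 x2 y2 z2 : ℤ) (hc : c = 1 ∨ c = -1) (hd : d = 1 ∨ d = -1) :
    c * x1 + d * x2 ≤ c * med3 x1 y1 z1 + d * med3 x2 y2 z2 ∨
    c * y1 + d * y2 ≤ c * med3 x1 y1 z1 + d * med3 x2 y2 z2 ∨
    c * z1 + d * z2 ≤ c * med3 x1 y1 z1 + d * med3 x2 y2 z2 := by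
  rw [med3_def, med3_def]; rcases hc with rfl | rfl <;> rcases hd with rfl | rfl <;> omega

/-- 1D interval lemma -/
lemma interval1D (U : Set ℤ) (hU : ∀ s ∈ U, ∀ t ∈ U, mu2 s t ∈ U)
    {a c t : ℤ} (ha : a ∈ U) (hc : c ∈ U) (h1 : a ≤ t) (h2 : t ≤ c) : t ∈ U := by
  have key : ∀ N : ℕ, ∀ a c t : ℤ, a ∈ U → c ∈ U → a ≤ t → t ≤ c →
      (c - a).toNat ≤ N → t ∈ U := by
    intro N
    induction N with
    | zero =>
      intro a c t ha hc h1 h2 hN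
      have : t = a := by omega
      rwa [this]
    | succ N ih =>
      intro a c t ha hc h1 h2 hN
      rcases eq_or_lt_of_le h1 with rfl | h1'
      · exact ha
      rcases eq_or_lt_of_le h2 with rfl | h2'
      · exact hc
      have hm : mu2 a c ∈ U := hU a ha c hc
      have hm' : mu2 c a ∈ U := hU c hc a ha
      have s1 := mu2_spec a c
      have s2 := mu2_spec c a
      rcases le_or_gt t (mu2 a c) with h | h
      · exact ih a (mu2 a c) t ha hm h1 h (by omega)
      · exact ih (mu2 c a) c t hm' hc (by omega) h2 (by omega)
  exact key (c - a).toNat a c t ha hc h1 h2 le_rfl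

/-- dichotomy for μ-closed subsets of ℤ avoiding 0 -/
lemma dicho1D (U : Set ℤ) (hU : ∀ s ∈ U, ∀ t ∈ U, mu2 s t ∈ U) (h0 : (0:ℤ) ∉ U) :
    (∀ t ∈ U, 1 ≤ t) ∨ (∀ t ∈ U, t ≤ -1) := by
  by_cases hp : ∀ t ∈ U, 1 ≤ t
  · exact Or.inl hp
  · right
    push_neg at hp
    obtain ⟨t0, ht0, ht0'⟩ := hp
    intro t ht
    by_contra h
    push_neg at h
    exact h0 (interval1D U hU ht0 ht (by omega) (by omega))

def Mu2Closed (T : Set (ℤ × ℤ)) : Prop :=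
  ∀ p ∈ T, ∀ q ∈ T, (mu2 p.1 q.1, mu2 p.2 q.2) ∈ T

/-- clamp: one unit step from c toward p -/
def tc (c p : ℤ) : ℤ := if c < p then c + 1 else if p < c then c - 1 else c

lemma tc_coord (p c : ℤ) :
    tc c (mu2 p c) = tc c p ∧ (mu2 p c - c).natAbs ≤ (p - c).natAbs ∧
      (2 ≤ (p - c).natAbs → (mu2 p c - c).natAbs < (p - c).natAbs) := by
  have := mu2_spec p c
  unfold tc
  split_ifs <;> omega

/-- unit step lemma: from any c ∈ T one can step one unit toward any p ∈ T -/
lemma unit_step (T : Set (ℤ × ℤ)) (hT : Mu2Closed T) {c p : ℤ × ℤ}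
    (hc : c ∈ T) (hp : p ∈ T) : (tc c.1 p.1, tc c.2 p.2) ∈ T := by
  have key : ∀ N : ℕ, ∀ p ∈ T, (p.1 - c.1).natAbs + (p.2 - c.2).natAbs ≤ N →
      (tc c.1 p.1, tc c.2 p.2) ∈ T := by
    intro N
    induction N with
    | zero =>
      intro p hp hN
      have h1 : p.1 = c.1 := by omega
      have h2 : p.2 = c.2 := by omega
      have : tc c.1 p.1 = p.1 ∧ tc c.2 p.2 = p.2 := by unfold tc; split_ifs <;> omega
      rw [this.1, this.2]
      exact hp
    | succ N ih =>
      intro p hp hN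
      by_cases hsmall : (p.1 - c.1).natAbs ≤ 1 ∧ (p.2 - c.2).natAbs ≤ 1
      · have : tc c.1 p.1 = p.1 ∧ tc c.2 p.2 = p.2 := by unfold tc; split_ifs <;> omega
        rw [this.1, this.2]
        exact hp
      · have hw : (mu2 p.1 c.1, mu2 p.2 c.2) ∈ T := hT p hp c hc
        have t1 := tc_coord p.1 c.1
        have t2 := tc_coord p.2 c.2
        have := ih (mu2 p.1 c.1, mu2 p.2 c.2) hw (by simp only []; omega)
        simp only [] at this
        rwa [t1.1, t2.1] at this
  exact key ((p.1 - c.1).natAbs + (p.2 - c.2).natAbs) p hp le_rfl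

/-- the diagonal path from (b,0) toward a "wing" point q -/
lemma diag_path (T : Set (ℤ × ℤ)) (hT : Mu2Closed T) {b q1 q2 : ℤ}
    (hv : ((b, 0) : ℤ × ℤ) ∈ T) (hq : ((q1, q2) : ℤ × ℤ) ∈ T)
    (hσ : q1 + q2 ≤ 0) (hq2 : 1 ≤ q2) (hb : 1 ≤ b) :
    ∀ K : ℕ, (K : ℤ) ≤ q2 → ((b - K, (K : ℤ)) : ℤ × ℤ) ∈ T := by
  intro K
  induction K with
  | zero => intro _; simpa using hv
  | succ K ih =>
    intro hK
    have hc : ((b - K, (K : ℤ)) : ℤ × ℤ) ∈ T := ih (by push_cast at hK ⊢; omega)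
    have hstep := unit_step T hT hc hq
    have e1 : tc (b - K) q1 = b - K - 1 := by
      unfold tc; push_cast at hK; split_ifs <;> omega
    have e2 : tc (K : ℤ) q2 = K + 1 := by
      unfold tc; push_cast at hK; split_ifs <;> omega
    simp only [e1, e2] at hstep
    have : ((b - ↑(K + 1), (↑(K + 1) : ℤ)) : ℤ × ℤ) = (b - K - 1, (K : ℤ) + 1) := by
      push_cast; ring_nf
    rw [this]
    exact hstep

/-- the core contradiction -/
lemma kill (T : Set (ℤ × ℤ)) (hT : Mu2Closed T)
    (hBpos : ∀ x : ℤ, ((x, 0) : ℤ × ℤ) ∈ T → 1 ≤ x)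
    (hBne : ∃ x : ℤ, ((x, 0) : ℤ × ℤ) ∈ T)
    (hq : ∃ q ∈ T, q.1 + q.2 ≤ 0 ∧ 1 ≤ q.2) : False := by
  obtain ⟨q, hqT, hσ, hq2⟩ := hq
  obtain ⟨b, hbB, hbmin⟩ := Int.exists_least_of_bdd (P := fun x => ((x, 0) : ℤ × ℤ) ∈ T)
    ⟨1, fun z hz => hBpos z hz⟩ hBne
  have hb1 : 1 ≤ b := hBpos b hbB
  have hq' : ((q.1, q.2) : ℤ × ℤ) ∈ T := by simpa using hqT
  have hdiag := diag_path T hT hbB hq' hσ hq2 hb1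
  have hrow : ∀ K : ℕ, (K : ℤ) ≤ q.2 → ∀ t ∈ T, t.2 = (K : ℤ) → b - K ≤ t.1 := by
    intro K
    induction K with
    | zero =>
      intro _ t ht ht2
      have : ((t.1, 0) : ℤ × ℤ) ∈ T := by
        have : t = (t.1, (0:ℤ)) := by
          rcases t with ⟨u, v⟩; simp at ht2 ⊢; exact ht2
        rwa [this] at ht
      have := hbmin t.1 this
      omega
    | succ K ih =>
      intro hK t ht ht2
      by_contra hcon
      push_neg at hcon
      have hdK : ((b - K, (K : ℤ)) : ℤ × ℤ) ∈ T := hdiag K (by push_cast at hK ⊢; omega)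
      have hm := hT _ hdK _ ht
      have hy : mu2 (K : ℤ) t.2 = (K : ℤ) := by
        rw [ht2]; push_cast; exact mu2_succ K
      simp only [hy] at hm
      have := ih (by push_cast at hK ⊢; omega) _ hm rfl
      have hs := mu2_spec (b - K) t.1
      simp only [] at this
      push_cast at hK hcon ht2
      omega
  have := hrow q.2.toNat (by omega) q hqT (by omega)
  omega

-- closure transport lemmas
lemma closed_fst (T : Set (ℤ × ℤ)) (hT : Mu2Closed T) :
    ∀ s ∈ Prod.fst '' T, ∀ t ∈ Prod.fst '' T, mu2 s t ∈ Prod.fst '' T := by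
  rintro s ⟨p, hp, rfl⟩ t ⟨q, hq, rfl⟩
  exact ⟨_, hT p hp q hq, rfl⟩

lemma closed_snd (T : Set (ℤ × ℤ)) (hT : Mu2Closed T) :
    ∀ s ∈ Prod.snd '' T, ∀ t ∈ Prod.snd '' T, mu2 s t ∈ Prod.snd '' T := by
  rintro s ⟨p, hp, rfl⟩ t ⟨q, hq, rfl⟩
  exact ⟨_, hT p hp q hq, rfl⟩

lemma closed_sliceA (T : Set (ℤ × ℤ)) (hT : Mu2Closed T) :
    ∀ s ∈ {y : ℤ | ((0, y) : ℤ × ℤ) ∈ T}, ∀ t ∈ {y : ℤ | ((0, y) : ℤ × ℤ) ∈ T},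
      mu2 s t ∈ {y : ℤ | ((0, y) : ℤ × ℤ) ∈ T} := by
  intro s hs t ht
  have := hT _ hs _ ht
  simpa [mu2_self] using this

lemma closed_sliceB (T : Set (ℤ × ℤ)) (hT : Mu2Closed T) :
    ∀ s ∈ {x : ℤ | ((x, 0) : ℤ × ℤ) ∈ T}, ∀ t ∈ {x : ℤ | ((x, 0) : ℤ × ℤ) ∈ T},
      mu2 s t ∈ {x : ℤ | ((x, 0) : ℤ × ℤ) ∈ T} := by
  intro s hs t ht
  have := hT _ hs _ ht
  simpa [mu2_self] using this

lemma closed_cut_sum (T : Set (ℤ × ℤ)) (hT : Mu2Closed T) :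
    Mu2Closed {p ∈ T | p.1 + p.2 ≤ 0} := by
  rintro p ⟨hp, hp'⟩ q ⟨hq, hq'⟩
  refine ⟨hT p hp q hq, ?_⟩
  have h1 := mu2_spec p.1 q.1
  have h2 := mu2_spec p.2 q.2
  simp only [Set.mem_setOf_eq] at *
  omega

lemma closed_cut_diff (T : Set (ℤ × ℤ)) (hT : Mu2Closed T) :
    Mu2Closed {p ∈ T | p.1 - p.2 ≤ 0} := by
  rintro p ⟨hp, hp'⟩ q ⟨hq, hq'⟩
  refine ⟨hT p hp q hq, ?_⟩
  have h1 := mu2_spec p.1 q.1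
  have h2 := mu2_spec p.2 q.2
  simp only [Set.mem_setOf_eq] at *
  omega

lemma closed_negx (T : Set (ℤ × ℤ)) (hT : Mu2Closed T) :
    Mu2Closed {p : ℤ × ℤ | ((-p.1, p.2) : ℤ × ℤ) ∈ T} := by
  intro p hp q hq
  have := hT _ hp _ hq
  simp only [Set.mem_setOf_eq] at *
  rwa [mu2_neg] at this

lemma closed_negy (T : Set (ℤ × ℤ)) (hT : Mu2Closed T) :
    Mu2Closed {p : ℤ × ℤ | ((p.1, -p.2) : ℤ × ℤ) ∈ T} := by
  intro p hp q hq
  have := hT _ hp _ hq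
  simp only [Set.mem_setOf_eq] at *
  rwa [mu2_neg] at this

lemma closed_negxy (T : Set (ℤ × ℤ)) (hT : Mu2Closed T) :
    Mu2Closed {p : ℤ × ℤ | ((-p.1, -p.2) : ℤ × ℤ) ∈ T} := by
  intro p hp q hq
  have := hT _ hp _ hq
  simp only [Set.mem_setOf_eq] at *
  rwa [mu2_neg, mu2_neg] at this

lemma closed_swap (T : Set (ℤ × ℤ)) (hT : Mu2Closed T) :
    Mu2Closed {p : ℤ × ℤ | ((p.2, p.1) : ℤ × ℤ) ∈ T} := by
  intro p hp q hq
  exact hT _ hp _ hq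

lemma closed_rot (T : Set (ℤ × ℤ)) (hT : Mu2Closed T) :
    Mu2Closed {p : ℤ × ℤ | ((-p.2, p.1) : ℤ × ℤ) ∈ T} := by
  intro p hp q hq
  have := hT _ hp _ hq
  simp only [Set.mem_setOf_eq] at *
  rwa [mu2_neg] at this

/-- the wrapped case: A and B slices both positive -/
lemma wrapped (T : Set (ℤ × ℤ)) (hT : Mu2Closed T)
    (hApos : ∀ y : ℤ, ((0, y) : ℤ × ℤ) ∈ T → 1 ≤ y)
    (hAne : ∃ y : ℤ, ((0, y) : ℤ × ℤ) ∈ T)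
    (hBpos : ∀ x : ℤ, ((x, 0) : ℤ × ℤ) ∈ T → 1 ≤ x)
    (hBne : ∃ x : ℤ, ((x, 0) : ℤ × ℤ) ∈ T)
    (h5 : ∃ w ∈ T, w.1 + w.2 ≤ 0) (h7 : ∃ w ∈ T, w.1 - w.2 ≤ 0) : False := by
  classical
  obtain ⟨w5, hw5T, hw5⟩ := h5
  set D : Set (ℤ × ℤ) := {p ∈ T | p.1 + p.2 ≤ 0} with hDdef
  have hD : Mu2Closed D := closed_cut_sum T hT
  have hw5D : w5 ∈ D := ⟨hw5T, hw5⟩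
  -- y-projection of D avoids 0
  have hYD0 : (0 : ℤ) ∉ Prod.snd '' D := by
    rintro ⟨p, ⟨hpT, hpσ⟩, hp2⟩
    have : ((p.1, 0) : ℤ × ℤ) ∈ T := by rw [← hp2, Prod.mk.eta]; exact hpT
    have := hBpos p.1 this
    omega
  rcases dicho1D _ (closed_snd D hD) hYD0 with hpos | hneg
  · -- all σ≤0 points have y ≥ 1 : direct kill
    exact kill T hT hBpos hBne ⟨w5, hw5T, hw5, hpos _ ⟨w5, hw5D, rfl⟩⟩
  · have hw52 : w5.2 ≤ -1 := hneg _ ⟨w5, hw5D, rfl⟩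
    set E : Set (ℤ × ℤ) := {p ∈ T | p.1 - p.2 ≤ 0} with hEdef
    have hE : Mu2Closed E := closed_cut_diff T hT
    obtain ⟨a0, ha0⟩ := hAne
    have ha01 : 1 ≤ a0 := hApos a0 ha0
    have huE : ((0, a0) : ℤ × ℤ) ∈ E := ⟨ha0, by simp; omega⟩
    have hYE0 : (0 : ℤ) ∉ Prod.snd '' E := by
      rintro ⟨p, ⟨hpT, hpδ⟩, hp2⟩
      have : ((p.1, 0) : ℤ × ℤ) ∈ T := by rw [← hp2, Prod.mk.eta]; exact hpT
      have := hBpos p.1 this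
      omega
    have hYE : ∀ t ∈ Prod.snd '' E, 1 ≤ t := by
      rcases dicho1D _ (closed_snd E hE) hYE0 with h | h
      · exact h
      · exact absurd (h _ ⟨(0, a0), huE, rfl⟩) (by omega)
    have hδw5 : 1 ≤ w5.1 - w5.2 := by
      by_contra hco
      push_neg at hco
      have : w5 ∈ E := ⟨hw5T, by omega⟩
      have := hYE _ ⟨w5, this, rfl⟩
      omega
    -- x-projection of D avoids 0
    have hXD0 : (0 : ℤ) ∉ Prod.fst '' D := by
      rintro ⟨p, ⟨hpT, hpσ⟩, hp1⟩
      have : ((0, p.2) : ℤ × ℤ) ∈ T := by rw [← hp1, Prod.mk.eta]; exact hpT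
      have := hApos p.2 this
      omega
    rcases dicho1D _ (closed_fst D hD) hXD0 with hxp | hxn
    · -- all D points have x ≥ 1: kill on the swapped world
      have hw51 : 1 ≤ w5.1 := hxp _ ⟨w5, hw5D, rfl⟩
      refine kill {p : ℤ × ℤ | ((p.2, p.1) : ℤ × ℤ) ∈ T} (closed_swap T hT) ?_ ?_ ?_
      · intro x hx; exact hApos x hx
      · exact ⟨a0, by simpa using ha0⟩
      · refine ⟨(w5.2, w5.1), by simpa using hw5T, by simp; omega, by simp; omega⟩
    · -- all D points have x ≤ -1: kill on the rotated world
      have hw51 : w5.1 ≤ -1 := hxn _ ⟨w5, hw5D, rfl⟩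
      refine kill {p : ℤ × ℤ | ((-p.2, p.1) : ℤ × ℤ) ∈ T} (closed_rot T hT) ?_ ?_ ?_
      · intro x hx; simp only [Set.mem_setOf_eq, neg_zero] at hx; exact hApos x hx
      · exact ⟨a0, by simp only [Set.mem_setOf_eq, neg_zero]; exact ha0⟩
      · refine ⟨(w5.2, -w5.1), ?_, by simp; omega, by simp; omega⟩
        simp only [Set.mem_setOf_eq, neg_neg]
        simpa using hw5T

/-- The 2-dimensional core theorem. -/
theorem twoD (T : Set (ℤ × ℤ)) (hT : Mu2Closed T)
    (h1 : ∃ w ∈ T, w.1 ≤ 0) (h2 : ∃ w ∈ T, 0 ≤ w.1)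
    (h3 : ∃ w ∈ T, w.2 ≤ 0) (h4 : ∃ w ∈ T, 0 ≤ w.2)
    (h5 : ∃ w ∈ T, w.1 + w.2 ≤ 0) (h6 : ∃ w ∈ T, 0 ≤ w.1 + w.2)
    (h7 : ∃ w ∈ T, w.1 - w.2 ≤ 0) (h8 : ∃ w ∈ T, w.2 - w.1 ≤ 0) :
    ((0, 0) : ℤ × ℤ) ∈ T := by
  by_contra h0
  -- A nonempty
  obtain ⟨u1, hu1, hu1'⟩ := h1
  obtain ⟨u2, hu2, hu2'⟩ := h2
  have hXT : (0 : ℤ) ∈ Prod.fst '' T :=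
    interval1D _ (closed_fst T hT) ⟨u1, hu1, rfl⟩ ⟨u2, hu2, rfl⟩ hu1' hu2'
  obtain ⟨pA, hpA, hpA1⟩ := hXT
  have hAne : ∃ y : ℤ, ((0, y) : ℤ × ℤ) ∈ T := ⟨pA.2, by rw [← hpA1, Prod.mk.eta]; exact hpA⟩
  obtain ⟨u3, hu3, hu3'⟩ := h3
  obtain ⟨u4, hu4, hu4'⟩ := h4
  have hYT : (0 : ℤ) ∈ Prod.snd '' T :=
    interval1D _ (closed_snd T hT) ⟨u3, hu3, rfl⟩ ⟨u4, hu4, rfl⟩ hu3' hu4'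
  obtain ⟨pB, hpB, hpB2⟩ := hYT
  have hBne : ∃ x : ℤ, ((x, 0) : ℤ × ℤ) ∈ T := ⟨pB.1, by rw [← hpB2, Prod.mk.eta]; exact hpB⟩
  have hA0 : (0 : ℤ) ∉ {y : ℤ | ((0, y) : ℤ × ℤ) ∈ T} := h0
  have hB0 : (0 : ℤ) ∉ {x : ℤ | ((x, 0) : ℤ × ℤ) ∈ T} := h0
  rcases dicho1D _ (closed_sliceA T hT) hA0 with hAp | hAn <;>
    rcases dicho1D _ (closed_sliceB T hT) hB0 with hBp | hBn
  · exact wrapped T hT hAp hAne hBp hBne h5 h7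
  · -- A positive, B negative : negate x
    refine wrapped {p : ℤ × ℤ | ((-p.1, p.2) : ℤ × ℤ) ∈ T} (closed_negx T hT) ?_ ?_ ?_ ?_ ?_ ?_
    · intro y hy; simp only [Set.mem_setOf_eq, neg_zero] at hy; exact hAp y hy
    · obtain ⟨a0, ha0⟩ := hAne; exact ⟨a0, by simp only [Set.mem_setOf_eq, neg_zero]; exact ha0⟩
    · intro x hx; simp only [Set.mem_setOf_eq] at hx; have := hBn _ hx; omega
    · obtain ⟨b0, hb0⟩ := hBne; exact ⟨-b0, by simp only [Set.mem_setOf_eq, neg_neg]; exact hb0⟩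
    · obtain ⟨w, hw, hw'⟩ := h8
      exact ⟨(-w.1, w.2), by simp only [Set.mem_setOf_eq, neg_neg, Prod.mk.eta]; exact hw, by simp; omega⟩
    · obtain ⟨w, hw, hw'⟩ := h6
      exact ⟨(-w.1, w.2), by simp only [Set.mem_setOf_eq, neg_neg, Prod.mk.eta]; exact hw, by simp; omega⟩
  · -- A negative, B positive : negate y
    refine wrapped {p : ℤ × ℤ | ((p.1, -p.2) : ℤ × ℤ) ∈ T} (closed_negy T hT) ?_ ?_ ?_ ?_ ?_ ?_
    · intro y hy; simp only [Set.mem_setOf_eq] at hy; have := hAn _ hy; omega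
    · obtain ⟨a0, ha0⟩ := hAne; exact ⟨-a0, by simp only [Set.mem_setOf_eq, neg_neg]; exact ha0⟩
    · intro x hx; simp only [Set.mem_setOf_eq, neg_zero] at hx; exact hBp x hx
    · obtain ⟨b0, hb0⟩ := hBne; exact ⟨b0, by simp only [Set.mem_setOf_eq, neg_zero]; exact hb0⟩
    · obtain ⟨w, hw, hw'⟩ := h7
      exact ⟨(w.1, -w.2), by simp only [Set.mem_setOf_eq, neg_neg, Prod.mk.eta]; exact hw, by simp; omega⟩
    · obtain ⟨w, hw, hw'⟩ := h5
      exact ⟨(w.1, -w.2), by simp only [Set.mem_setOf_eq, neg_neg, Prod.mk.eta]; exact hw, by simp; omega⟩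
  · -- both negative : negate both
    refine wrapped {p : ℤ × ℤ | ((-p.1, -p.2) : ℤ × ℤ) ∈ T} (closed_negxy T hT) ?_ ?_ ?_ ?_ ?_ ?_
    · intro y hy; simp only [Set.mem_setOf_eq, neg_zero] at hy; have := hAn _ hy; omega
    · obtain ⟨a0, ha0⟩ := hAne; exact ⟨-a0, by simp only [Set.mem_setOf_eq, neg_neg, neg_zero]; exact ha0⟩
    · intro x hx; simp only [Set.mem_setOf_eq, neg_zero] at hx; have := hBn _ hx; omega
    · obtain ⟨b0, hb0⟩ := hBne; exact ⟨-b0, by simp only [Set.mem_setOf_eq, neg_neg, neg_zero]; exact hb0⟩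
    · obtain ⟨w, hw, hw'⟩ := h6
      exact ⟨(-w.1, -w.2), by simp only [Set.mem_setOf_eq, neg_neg, Prod.mk.eta]; exact hw, by simp; omega⟩
    · obtain ⟨w, hw, hw'⟩ := h8
      exact ⟨(-w.1, -w.2), by simp only [Set.mem_setOf_eq, neg_neg, Prod.mk.eta]; exact hw, by simp; omega⟩

lemma med3_majority (a b : ℤ) : med3 a a b = a ∧ med3 a b a = a ∧ med3 b a a = a := by
  simp only [med3, medianOp, Matrix.cons_val_zero, Matrix.cons_val_one, Matrix.head_cons,
    Matrix.cons_val_two, Matrix.tail_cons]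
  omega

lemma mem_med {n : ℕ} {S : Set (Fin n → ℤ)} (hS : CptClosed medianOp S)
    {u v w : Fin n → ℤ} (hu : u ∈ S) (hv : v ∈ S) (hw : w ∈ S) :
    (fun i => med3 (u i) (v i) (w i)) ∈ S := by
  have := hS ![u, v, w] (by
    intro l
    fin_cases l <;> simpa)
  have e : (fun i => medianOp (fun l => ![u, v, w] l i)) = fun i => med3 (u i) (v i) (w i) := by
    funext i
    rw [medianOp_eq]
    simp
  rwa [e] at this

/-- Baker–Pixley style lemma -/
lemma BP {n : ℕ} (S : Set (Fin n → ℤ)) (hmed : CptClosed medianOp S) (x : Fin n → ℤ)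
    (h : ∀ i j : Fin n, i ≠ j → ∃ s ∈ S, s i = x i ∧ s j = x j) :
    ∀ J : Finset (Fin n), 2 ≤ J.card → ∃ s ∈ S, ∀ i ∈ J, s i = x i := by
  intro J
  induction J using Finset.strongInduction with
  | _ J ih =>
    intro hJ
    rcases eq_or_lt_of_le hJ with h2 | h3
    · obtain ⟨i, j, hij, rfl⟩ := Finset.card_eq_two.mp h2.symm
      obtain ⟨s, hs, e1, e2⟩ := h i j hij
      refine ⟨s, hs, ?_⟩
      intro l hl
      rcases Finset.mem_insert.mp hl with rfl | hl
      · exact e1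
      · rw [Finset.mem_singleton.mp hl]; exact e2
    · obtain ⟨j1, hj1⟩ := Finset.card_pos.mp (show 0 < J.card by omega)
      have hc1 : (J.erase j1).card = J.card - 1 := Finset.card_erase_of_mem hj1
      obtain ⟨j2, hj2⟩ := Finset.card_pos.mp (show 0 < (J.erase j1).card by omega)
      have hj2J : j2 ∈ J := Finset.mem_of_mem_erase hj2
      have hj21 : j2 ≠ j1 := Finset.ne_of_mem_erase hj2
      obtain ⟨s1, hs1, he1⟩ := ih (J.erase j1) (Finset.erase_ssubset hj1) (by omega)
      obtain ⟨s2, hs2, he2⟩ := ih (J.erase j2) (Finset.erase_ssubset hj2J) (by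
        rw [Finset.card_erase_of_mem hj2J]; omega)
      obtain ⟨j3, hj3⟩ := Finset.card_pos.mp (show 0 < ((J.erase j1).erase j2).card by
        rw [Finset.card_erase_of_mem hj2, hc1]; omega)
      have hj3J : j3 ∈ J := Finset.mem_of_mem_erase (Finset.mem_of_mem_erase hj3)
      have hj32 : j3 ≠ j2 := Finset.ne_of_mem_erase hj3
      have hj31 : j3 ≠ j1 := Finset.ne_of_mem_erase (Finset.mem_of_mem_erase hj3)
      obtain ⟨s3, hs3, he3⟩ := ih (J.erase j3) (Finset.erase_ssubset hj3J) (by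
        rw [Finset.card_erase_of_mem hj3J]; omega)
      refine ⟨fun i => med3 (s1 i) (s2 i) (s3 i), mem_med hmed hs1 hs2 hs3, ?_⟩
      intro i hi
      show med3 (s1 i) (s2 i) (s3 i) = x i
      by_cases hi1 : i = j1
      · have e2 : s2 i = x i := he2 i (Finset.mem_erase.mpr ⟨by rw [hi1]; exact hj21.symm, hi⟩)
        have e3 : s3 i = x i := he3 i (Finset.mem_erase.mpr ⟨by rw [hi1]; exact hj31.symm, hi⟩)
        rw [e2, e3]
        exact (med3_majority (x i) (s1 i)).2.2
      · have e1 : s1 i = x i := he1 i (Finset.mem_erase.mpr ⟨hi1, hi⟩)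
        by_cases hi2 : i = j2
        · have e3 : s3 i = x i := he3 i (Finset.mem_erase.mpr ⟨by rw [hi2]; exact hj32.symm, hi⟩)
          rw [e1, e3]
          exact (med3_majority (x i) (s2 i)).2.1
        · have e2 : s2 i = x i := he2 i (Finset.mem_erase.mpr ⟨hi2, hi⟩)
          rw [e1, e2]
          exact (med3_majority (x i) (s3 i)).1

lemma row_cases {mR n : ℕ} (A : Matrix (Fin mR) (Fin n) ℤ) (r : Fin mR)
    (hcard : {j | A r j ≠ 0}.ncard ≤ 2) :
    (∀ v : Fin n → ℤ, ∑ j, A r j * v j = 0) ∨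
    (∃ p, (A r p = 1 ∨ A r p = -1 ∨ A r p ≠ 0) ∧
      ∀ v : Fin n → ℤ, ∑ j, A r j * v j = A r p * v p) ∨
    (∃ p q, p ≠ q ∧ A r p ≠ 0 ∧ A r q ≠ 0 ∧
      ∀ v : Fin n → ℤ, ∑ j, A r j * v j = A r p * v p + A r q * v q) := by
  classical
  set N : Finset (Fin n) := Finset.univ.filter (fun j => A r j ≠ 0) with hN
  have hset : {j | A r j ≠ 0} = ↑N := by ext j; simp [hN]
  rw [hset, Set.ncard_coe_finset] at hcard
  have hsum : ∀ v : Fin n → ℤ, ∑ j, A r j * v j = ∑ j ∈ N, A r j * v j := by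
    intro v
    refine (Finset.sum_subset (Finset.subset_univ N) ?_).symm
    intro j _ hj
    have : A r j = 0 := by
      by_contra hc
      exact hj (by simp [hN, hc])
    simp [this]
  rcases Nat.lt_or_ge N.card 1 with h0 | h1
  · left
    intro v
    have : N = ∅ := Finset.card_eq_zero.mp (by omega)
    rw [hsum v, this, Finset.sum_empty]
  rcases Nat.lt_or_ge N.card 2 with h1' | h2'
  · right; left
    obtain ⟨p, hp⟩ := Finset.card_eq_one.mp (show N.card = 1 by omega)
    have hpN : p ∈ N := by rw [hp]; exact Finset.mem_singleton_self p
    have hpn : A r p ≠ 0 := by simpa [hN] using hpN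
    exact ⟨p, Or.inr (Or.inr hpn), fun v => by rw [hsum v, hp, Finset.sum_singleton]⟩
  · right; right
    obtain ⟨p, q, hpq, hpqN⟩ := Finset.card_eq_two.mp (show N.card = 2 by omega)
    have hpN : p ∈ N := by rw [hpqN]; simp
    have hqN : q ∈ N := by rw [hpqN]; simp
    exact ⟨p, q, hpq, by simpa [hN] using hpN, by simpa [hN] using hqN,
      fun v => by rw [hsum v, hpqN, Finset.sum_pair hpq]⟩

lemma unit_of_ne {mR n : ℕ} {A : Matrix (Fin mR) (Fin n) ℤ} (hA : UnitMatrix A)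
    {r : Fin mR} {p : Fin n} (h : A r p ≠ 0) : A r p = 1 ∨ A r p = -1 := by
  rcases hA r p with h0 | h0 | h0
  · exact absurd h0 h
  · exact Or.inr h0
  · exact Or.inl h0

theorem fwd_mu {mR n : ℕ} (A : Matrix (Fin mR) (Fin n) ℤ) (b : Fin mR → ℝ)
    (hA : UnitMatrix A) (h2 : RowSupportLE A 2) :
    CptClosed muOp {x : Fin n → ℤ | ∀ i, b i ≤ ((∑ j, A i j * x j : ℤ) : ℝ)} := by
  intro x hx
  have hu := hx 0
  have hv := hx 1
  simp only [Set.mem_setOf_eq] at hu hv ⊢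
  intro r
  simp only [muOp_eq]
  have key : (∑ j, A r j * x 0 j) ≤ (∑ j, A r j * mu2 (x 0 j) (x 1 j)) ∨
      (∑ j, A r j * x 1 j) ≤ (∑ j, A r j * mu2 (x 0 j) (x 1 j)) := by
    rcases row_cases A r (h2 r) with hz | ⟨p, hp, hsum⟩ | ⟨p, q, hpq, hp, hq, hsum⟩
    · rw [hz, hz, hz]; left; exact le_refl 0
    · rw [hsum, hsum, hsum]
      have hp' : A r p ≠ 0 := by rcases hp with h|h|h <;> simp [h]
      exact mu2_single_min (A r p) (x 0 p) (x 1 p) (unit_of_ne hA hp')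
    · rw [hsum, hsum, hsum]
      exact mu2_pair_min _ _ _ _ _ _ (unit_of_ne hA hp) (unit_of_ne hA hq)
  rcases key with h | h
  · exact le_trans (hu r) (by exact_mod_cast h)
  · exact le_trans (hv r) (by exact_mod_cast h)

theorem fwd_med {mR n : ℕ} (A : Matrix (Fin mR) (Fin n) ℤ) (b : Fin mR → ℝ)
    (hA : UnitMatrix A) (h2 : RowSupportLE A 2) :
    CptClosed medianOp {x : Fin n → ℤ | ∀ i, b i ≤ ((∑ j, A i j * x j : ℤ) : ℝ)} := by
  intro x hx
  have hu := hx 0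
  have hv := hx 1
  have hw := hx 2
  simp only [Set.mem_setOf_eq] at hu hv hw ⊢
  intro r
  simp only [medianOp_eq]
  have key : (∑ j, A r j * x 0 j) ≤ (∑ j, A r j * med3 (x 0 j) (x 1 j) (x 2 j)) ∨
      (∑ j, A r j * x 1 j) ≤ (∑ j, A r j * med3 (x 0 j) (x 1 j) (x 2 j)) ∨
      (∑ j, A r j * x 2 j) ≤ (∑ j, A r j * med3 (x 0 j) (x 1 j) (x 2 j)) := by
    rcases row_cases A r (h2 r) with hz | ⟨p, hp, hsum⟩ | ⟨p, q, hpq, hp, hq, hsum⟩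
    · rw [hz, hz, hz, hz]; left; exact le_refl 0
    · rw [hsum, hsum, hsum, hsum]
      have hp' : A r p ≠ 0 := by rcases hp with h|h|h <;> simp [h]
      exact med3_single_min (A r p) _ _ _ (unit_of_ne hA hp')
    · rw [hsum, hsum, hsum, hsum]
      exact med3_pair_min _ _ _ _ _ _ _ _ (unit_of_ne hA hp) (unit_of_ne hA hq)
  rcases key with h | h | h
  · exact le_trans (hu r) (by exact_mod_cast h)
  · exact le_trans (hv r) (by exact_mod_cast h)
  · exact le_trans (hw r) (by exact_mod_cast h)

lemma mem_mu {n : ℕ} {S : Set (Fin n → ℤ)} (hS : CptClosed muOp S)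
    {u v : Fin n → ℤ} (hu : u ∈ S) (hv : v ∈ S) :
    (fun i => mu2 (u i) (v i)) ∈ S := by
  have := hS ![u, v] (by intro l; fin_cases l <;> simpa)
  have e : (fun i => muOp (fun l => ![u, v] l i)) = fun i => mu2 (u i) (v i) := by
    funext i
    rw [muOp_eq]
    simp
  rwa [e] at this

/-- coefficient tables -/
def cf1 : Fin 8 → ℤ := ![1, -1, 0, 0, 1, -1, 1, -1]
def cf2 : Fin 8 → ℤ := ![0, 0, 1, -1, 1, -1, -1, 1]

lemma int_least (V : Set ℤ) (hne : V.Nonempty) (hbdd : BddBelow V) :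
    ∃ m, m ∈ V ∧ ∀ v ∈ V, m ≤ v := by
  obtain ⟨b0, hb0⟩ := hbdd
  obtain ⟨lb, h1, h2⟩ := Int.exists_least_of_bdd (P := fun z => z ∈ V)
    ⟨b0, fun z hz => hb0 hz⟩ hne
  exact ⟨lb, h1, h2⟩

section Assembly
variable {n : ℕ}

/-- value of form `idx` at `s` -/
def fval (idx : Fin n × Fin n × Fin 8) (s : Fin n → ℤ) : ℤ :=
  cf1 idx.2.2 * s idx.1 + cf2 idx.2.2 * s idx.2.1

theorem backward (hn : 2 ≤ n) (S : Set (Fin n → ℤ))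
    (hmu : CptClosed muOp S) (hmed : CptClosed medianOp S) : RepUTVPI S := by
  classical
  rcases Set.eq_empty_or_nonempty S with rfl | ⟨s₀, hs₀⟩
  · refine ⟨1, Matrix.of (fun _ _ => 0), fun _ => 1, ?_, ?_, ?_⟩
    · intro i j; exact Or.inl rfl
    · intro i; simp
    · ext x
      simp
  · -- main case
    set Good : Fin n × Fin n × Fin 8 → Prop :=
      fun idx => idx.1 < idx.2.1 ∧ BddBelow (fval idx '' S) with hGood
    have hm : ∀ idx : Fin n × Fin n × Fin 8, ∃ mi : ℤ,
        Good idx → (mi ∈ fval idx '' S ∧ ∀ v ∈ fval idx '' S, mi ≤ v) := by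
      intro idx
      by_cases h : Good idx
      · obtain ⟨m, hm1, hm2⟩ := int_least _ ⟨fval idx s₀, Set.mem_image_of_mem _ hs₀⟩ h.2
        exact ⟨m, fun _ => ⟨hm1, hm2⟩⟩
      · exact ⟨0, fun hc => absurd hc h⟩
    choose mv hmv using hm
    set A' : Fin n × Fin n × Fin 8 → Fin n → ℤ := fun idx l =>
      if Good idx then
        (if l = idx.1 then cf1 idx.2.2 else if l = idx.2.1 then cf2 idx.2.2 else 0)
      else 0 with hA'
    set b' : Fin n × Fin n × Fin 8 → ℝ := fun idx =>
      if Good idx then ((mv idx : ℤ) : ℝ) else 0 with hb'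
    have sumRow : ∀ idx, Good idx → ∀ v : Fin n → ℤ,
        (∑ l, A' idx l * v l) = fval idx v := by
      intro idx hg v
      have hij : idx.1 ≠ idx.2.1 := ne_of_lt hg.1
      have hzero : ∀ l ∈ Finset.univ, l ∉ ({idx.1, idx.2.1} : Finset (Fin n)) →
          A' idx l * v l = 0 := by
        intro l _ hl
        simp only [Finset.mem_insert, Finset.mem_singleton] at hl
        push_neg at hl
        simp [hA', if_pos hg, hl.1, hl.2]
      rw [← Finset.sum_subset (Finset.subset_univ _) hzero,
        Finset.sum_pair hij]
      simp [hA', if_pos hg, hij, if_neg (Ne.symm hij), fval]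
    set mR := Fintype.card (Fin n × Fin n × Fin 8) with hmR
    set e : Fin mR ≃ Fin n × Fin n × Fin 8 := (Fintype.equivFin _).symm with he
    refine ⟨mR, Matrix.of (fun r l => A' (e r) l), fun r => b' (e r), ?_, ?_, ?_⟩
    · -- UnitMatrix
      intro r l
      simp only [Matrix.of_apply, hA']
      have h1 : cf1 (e r).2.2 = 0 ∨ cf1 (e r).2.2 = -1 ∨ cf1 (e r).2.2 = 1 := by
        generalize (e r).2.2 = k; fin_cases k <;> decide
      have h2 : cf2 (e r).2.2 = 0 ∨ cf2 (e r).2.2 = -1 ∨ cf2 (e r).2.2 = 1 := by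
        generalize (e r).2.2 = k; fin_cases k <;> decide
      split_ifs
      · exact h1
      · exact h2
      · exact Or.inl rfl
      · exact Or.inl rfl
    · -- RowSupportLE 2
      intro r
      have hsub : {l | Matrix.of (fun r l => A' (e r) l) r l ≠ 0} ⊆
          {(e r).1, (e r).2.1} := by
        intro l hl
        simp only [Set.mem_setOf_eq, Matrix.of_apply, hA'] at hl
        by_contra hc
        simp only [Set.mem_insert_iff, Set.mem_singleton_iff] at hc
        push_neg at hc
        apply hl
        simp [hc.1, hc.2]
      calc {l | Matrix.of (fun r l => A' (e r) l) r l ≠ 0}.ncard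
          ≤ ({(e r).1, (e r).2.1} : Set (Fin n)).ncard :=
            Set.ncard_le_ncard hsub (Set.toFinite _)
        _ ≤ 2 := by
            apply le_trans (Set.ncard_insert_le _ _)
            simp
    · -- set equality
      ext x
      simp only [Set.mem_setOf_eq, Matrix.of_apply]
      constructor
      · intro hxS r
        by_cases hg : Good (e r)
        · rw [sumRow _ hg x]
          simp only [hb', if_pos hg]
          have := (hmv (e r) hg).2 _ ⟨x, hxS, rfl⟩
          exact_mod_cast this
        · simp only [hb', if_neg hg]
          have : ∀ l, A' (e r) l = 0 := by intro l; simp [hA', if_neg hg]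
          simp [this]
      · intro hx
        -- witnesses for each ordered pair i < j and each form
        have hwit : ∀ i j : Fin n, i < j → ∀ k : Fin 8,
            ∃ s ∈ S, fval (i, j, k) s ≤ fval (i, j, k) x := by
          intro i j hij k
          by_cases hbdd : BddBelow (fval (i, j, k) '' S)
          · have hg : Good (i, j, k) := ⟨hij, hbdd⟩
            have hr := hx (e.symm (i, j, k))
            rw [show e (e.symm (i, j, k)) = (i, j, k) from e.apply_symm_apply _] at hr
            rw [sumRow _ hg x] at hr
            simp only [hb', if_pos hg] at hr
            have hmin : (mv (i, j, k) : ℤ) ≤ fval (i, j, k) x := by exact_mod_cast hr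
            obtain ⟨s, hs, hvs⟩ := (hmv (i, j, k) hg).1
            exact ⟨s, hs, by rw [hvs]; exact hmin⟩
          · obtain ⟨v, ⟨s, hs, rfl⟩, hlt⟩ := not_bddBelow_iff.mp hbdd (fval (i, j, k) x)
            exact ⟨s, hs, le_of_lt hlt⟩
        have hpair : ∀ i j : Fin n, i < j → ∃ s ∈ S, s i = x i ∧ s j = x j := by
          intro i j hij
          set T : Set (ℤ × ℤ) :=
            {p | ∃ s ∈ S, s i = p.1 + x i ∧ s j = p.2 + x j} with hTdef
          have hT : Mu2Closed T := by
            rintro p ⟨s, hs, hsi, hsj⟩ q ⟨s', hs', hsi', hsj'⟩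
            refine ⟨fun l => mu2 (s l) (s' l), mem_mu hmu hs hs', ?_, ?_⟩
            · show mu2 (s i) (s' i) = (mu2 p.1 q.1, mu2 p.2 q.2).1 + x i
              rw [hsi, hsi', mu2_add_const]
            · show mu2 (s j) (s' j) = (mu2 p.1 q.1, mu2 p.2 q.2).2 + x j
              rw [hsj, hsj', mu2_add_const]
          have hmem : ∀ s ∈ S, ((s i - x i, s j - x j) : ℤ × ℤ) ∈ T := by
            intro s hs
            exact ⟨s, hs, by ring, by ring⟩
          have key := twoD T hT
            (by obtain ⟨s, hs, h⟩ := hwit i j hij 0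
                refine ⟨_, hmem s hs, ?_⟩
                simp only [fval] at h
                rw [show cf1 (0 : Fin 8) = 1 from by decide,
                  show cf2 (0 : Fin 8) = 0 from by decide] at h
                simp at h ⊢
                omega)
            (by obtain ⟨s, hs, h⟩ := hwit i j hij 1
                refine ⟨_, hmem s hs, ?_⟩
                simp only [fval] at h
                rw [show cf1 (1 : Fin 8) = -1 from by decide,
                  show cf2 (1 : Fin 8) = 0 from by decide] at h
                simp at h ⊢
                omega)
            (by obtain ⟨s, hs, h⟩ := hwit i j hij 2
                refine ⟨_, hmem s hs, ?_⟩
                simp only [fval] at h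
                rw [show cf1 (2 : Fin 8) = 0 from by decide,
                  show cf2 (2 : Fin 8) = 1 from by decide] at h
                simp at h ⊢
                omega)
            (by obtain ⟨s, hs, h⟩ := hwit i j hij 3
                refine ⟨_, hmem s hs, ?_⟩
                simp only [fval] at h
                rw [show cf1 (3 : Fin 8) = 0 from by decide,
                  show cf2 (3 : Fin 8) = -1 from by decide] at h
                simp at h ⊢
                omega)
            (by obtain ⟨s, hs, h⟩ := hwit i j hij 4
                refine ⟨_, hmem s hs, ?_⟩
                simp only [fval] at h
                rw [show cf1 (4 : Fin 8) = 1 from by decide,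
                  show cf2 (4 : Fin 8) = 1 from by decide] at h
                simp at h ⊢
                omega)
            (by obtain ⟨s, hs, h⟩ := hwit i j hij 5
                refine ⟨_, hmem s hs, ?_⟩
                simp only [fval] at h
                rw [show cf1 (5 : Fin 8) = -1 from by decide,
                  show cf2 (5 : Fin 8) = -1 from by decide] at h
                simp at h ⊢
                omega)
            (by obtain ⟨s, hs, h⟩ := hwit i j hij 6
                refine ⟨_, hmem s hs, ?_⟩
                simp only [fval] at h
                rw [show cf1 (6 : Fin 8) = 1 from by decide,
                  show cf2 (6 : Fin 8) = -1 from by decide] at h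
                simp at h ⊢
                omega)
            (by obtain ⟨s, hs, h⟩ := hwit i j hij 7
                refine ⟨_, hmem s hs, ?_⟩
                simp only [fval] at h
                rw [show cf1 (7 : Fin 8) = -1 from by decide,
                  show cf2 (7 : Fin 8) = 1 from by decide] at h
                simp at h ⊢
                omega)
          obtain ⟨s, hs, hsi, hsj⟩ := key
          exact ⟨s, hs, by omega, by omega⟩
        have hBP := BP S hmed x (by
          intro i j hij
          rcases lt_or_gt_of_ne hij with h | h
          · exact hpair i j h
          · obtain ⟨s, hs, h1, h2⟩ := hpair j i h
            exact ⟨s, hs, h2, h1⟩)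
        obtain ⟨s, hs, hall⟩ := hBP Finset.univ (by simp [Finset.card_univ]; omega)
        have : s = x := funext fun i => hall i (Finset.mem_univ i)
        rwa [← this]

end Assembly


/-- `S` is representable by a UTVPI system iff `S` is closed under
`μ` and the median operation. -/
theorem stmt_15 {n : ℕ} (hn : 2 ≤ n) (S : Set (Fin n → ℤ)) :
    RepUTVPI S ↔ (CptClosed muOp S ∧ CptClosed medianOp S) := by
  constructor
  · rintro ⟨mR, A, b, hU, hR, rfl⟩
    exact ⟨fwd_mu A b hU hR, fwd_med A b hU hR⟩
  · rintro ⟨h1, h2⟩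
    exact backward hn S h1 h2
end

section
/- Let S ⊆ ℤ². If S is closed under the directed discrete midpoint operation μ, then S is representable by a UTVPI system. -/
-- ===== auxiliary development =====

def DM (m a b : ℤ) : Prop :=
  (b ≤ a ∧ a + b ≤ 2*m ∧ 2*m ≤ a + b + 1) ∨ (a < b ∧ a + b - 1 ≤ 2*m ∧ 2*m ≤ a + b)

theorem mu_spec (a b : ℤ) : DM (muOp ![a, b]) a b := by
  unfold muOp DM
  simp only [Matrix.cons_val_one, Matrix.head_cons, Matrix.cons_val_zero]
  by_cases h : b ≤ a
  · left
    refine ⟨h, ?_, ?_⟩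
    · have h1 : ((a + b : ℤ) : ℚ) / 2 ≤ (⌈((a + b : ℤ) : ℚ) / 2⌉ : ℚ) := Int.le_ceil _
      simp only [h, ↓reduceIte]
      have : ((a+b : ℤ) : ℚ) ≤ 2 * (⌈((a + b : ℤ) : ℚ) / 2⌉ : ℚ) := by linarith
      exact_mod_cast this
    · have h1 : (⌈((a + b : ℤ) : ℚ) / 2⌉ : ℚ) < ((a + b : ℤ) : ℚ) / 2 + 1 := Int.ceil_lt_add_one _
      simp only [h, ↓reduceIte]
      have : 2 * (⌈((a + b : ℤ) : ℚ) / 2⌉ : ℚ) < ((a+b:ℤ):ℚ) + 2 := by linarith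
      have := (by exact_mod_cast this : 2 * ⌈((a + b : ℤ) : ℚ) / 2⌉ < a + b + 2)
      omega
  · right
    refine ⟨by omega, ?_, ?_⟩
    · have h1 : ((a + b : ℤ) : ℚ) / 2 - 1 < (⌊((a + b : ℤ) : ℚ) / 2⌋ : ℚ) := Int.sub_one_lt_floor _
      simp only [h, ↓reduceIte]
      have : ((a+b:ℤ):ℚ) - 2 < 2 * (⌊((a + b : ℤ) : ℚ) / 2⌋ : ℚ) := by linarith
      have := (by exact_mod_cast this : a + b - 2 < 2 * ⌊((a + b : ℤ) : ℚ) / 2⌋)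
      omega
    · have h1 : (⌊((a + b : ℤ) : ℚ) / 2⌋ : ℚ) ≤ ((a + b : ℤ) : ℚ) / 2 := Int.floor_le _
      simp only [h, ↓reduceIte]
      have : 2 * (⌊((a + b : ℤ) : ℚ) / 2⌋ : ℚ) ≤ ((a+b:ℤ):ℚ) := by linarith
      exact_mod_cast this

theorem eta2 (p : Fin 2 → ℤ) : p = ![p 0, p 1] := by
  funext i; fin_cases i <;> rfl

theorem step {S : Set (Fin 2 → ℤ)} (hS : CptClosed muOp S)
    {a b c d : ℤ} (h1 : ![a, b] ∈ S) (h2 : ![c, d] ∈ S)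
    {m1 m2 : ℤ} (hm1 : DM m1 a c) (hm2 : DM m2 b d) : ![m1, m2] ∈ S := by
  have h := hS ![![a, b], ![c, d]] (by
    intro l; fin_cases l <;> simpa)
  have e1 : (fun i => muOp fun l => (![![a, b], ![c, d]] : Fin 2 → Fin 2 → ℤ) l i) = ![m1, m2] := by
    funext i
    have key : ∀ (x y : ℤ) (m : ℤ), DM m x y → muOp ![x, y] = m := by
      intro x y m hm
      have := mu_spec x y
      unfold DM at this hm
      omega
    fin_cases i
    · have : (fun l => (![![a, b], ![c, d]] : Fin 2 → Fin 2 → ℤ) l 0) = ![a, c] := by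
        funext l; fin_cases l <;> rfl
      show muOp (fun l => (![![a, b], ![c, d]] : Fin 2 → Fin 2 → ℤ) l 0) = m1
      rw [this]; exact key a c m1 hm1
    · have : (fun l => (![![a, b], ![c, d]] : Fin 2 → Fin 2 → ℤ) l 1) = ![b, d] := by
        funext l; fin_cases l <;> rfl
      show muOp (fun l => (![![a, b], ![c, d]] : Fin 2 → Fin 2 → ℤ) l 1) = m2
      rw [this]; exact key b d m2 hm2
  rwa [e1] at h

theorem exists_dm (a b : ℤ) : ∃ m, DM m a b := ⟨muOp ![a, b], mu_spec a b⟩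


/-- horizontal fill -/
theorem rowFill (hS : CptClosed muOp S) : ∀ (n : ℕ) (u u' v w : ℤ), (u' - u).toNat ≤ n →
    ![u, v] ∈ S → ![u', v] ∈ S → u ≤ w → w ≤ u' → ![w, v] ∈ S := by
  intro n
  induction n with
  | zero => intro u u' v w hn h1 h2 hl hr
            have : u = w := by omega
            subst this; exact h1
  | succ n ih =>
    intro u u' v w hn h1 h2 hl hr
    rcases eq_or_lt_of_le hl with rfl | hl'
    · exact h1
    rcases eq_or_lt_of_le hr with rfl | hr'
    · exact h2
    obtain ⟨m, hm⟩ := exists_dm u u'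
    have hmv : DM v v v := by unfold DM; omega
    have hmem : ![m, v] ∈ S := step hS h1 h2 hm hmv
    have hb : u < m ∧ m < u' := by unfold DM at hm; omega
    rcases le_or_gt w m with h | h
    · exact ih u m v w (by omega) h1 hmem (by omega) h
    · exact ih m u' v w (by omega) hmem h2 (by omega) (by omega)

/-- diagonal fill along (1,1) offset by c -/
theorem diagFill (hS : CptClosed muOp S) : ∀ (n : ℕ) (c p q w : ℤ), (q - p).toNat ≤ n →
    ![p + c, p] ∈ S → ![q + c, q] ∈ S → p ≤ w → w ≤ q → ![w + c, w] ∈ S := by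
  intro n
  induction n with
  | zero => intro c p q w hn h1 h2 hl hr
            have : p = w := by omega
            subst this; exact h1
  | succ n ih =>
    intro c p q w hn h1 h2 hl hr
    rcases eq_or_lt_of_le hl with rfl | hl'
    · exact h1
    rcases eq_or_lt_of_le hr with rfl | hr'
    · exact h2
    obtain ⟨m, hm⟩ := exists_dm p q
    have hm1 : DM (m + c) (p + c) (q + c) := by unfold DM at hm ⊢; omega
    have hmem : ![m + c, m] ∈ S := step hS h1 h2 hm1 hm
    have hb : p < m ∧ m < q := by unfold DM at hm; omega
    rcases le_or_gt w m with h | h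
    · exact ih c p m w (by omega) h1 hmem (by omega) h
    · exact ih c m q w (by omega) hmem h2 (by omega) (by omega)

/-- anti-diagonal fill: points of the form (w, c - w) -/
theorem adiagFill (hS : CptClosed muOp S) : ∀ (n : ℕ) (c p q w : ℤ), (q - p).toNat ≤ n →
    ![p, c - p] ∈ S → ![q, c - q] ∈ S → p ≤ w → w ≤ q → ![w, c - w] ∈ S := by
  intro n
  induction n with
  | zero => intro c p q w hn h1 h2 hl hr
            have : p = w := by omega
            subst this; exact h1
  | succ n ih =>
    intro c p q w hn h1 h2 hl hr
    rcases eq_or_lt_of_le hl with rfl | hl'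
    · exact h1
    rcases eq_or_lt_of_le hr with rfl | hr'
    · exact h2
    obtain ⟨m, hm⟩ := exists_dm p q
    have hm2 : DM (c - m) (c - p) (c - q) := by unfold DM at hm ⊢; omega
    have hmem : ![m, c - m] ∈ S := step hS h1 h2 hm hm2
    have hb : p < m ∧ m < q := by unfold DM at hm; omega
    rcases le_or_gt w m with h | h
    · exact ih c p m w (by omega) h1 hmem (by omega) h
    · exact ih c m q w (by omega) hmem h2 (by omega) (by omega)

/-- bisect to an exact first coordinate -/
theorem vertPoint (hS : CptClosed muOp S) : ∀ (n : ℕ) (p0 p1 q0 q1 e : ℤ), (q0 - p0).toNat ≤ n →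
    ![p0, p1] ∈ S → ![q0, q1] ∈ S → p0 ≤ e → e ≤ q0 → ∃ y, ![e, y] ∈ S := by
  intro n
  induction n with
  | zero => intro p0 p1 q0 q1 e hn h1 h2 hl hr
            have : p0 = e := by omega
            subst this; exact ⟨p1, h1⟩
  | succ n ih =>
    intro p0 p1 q0 q1 e hn h1 h2 hl hr
    rcases eq_or_lt_of_le hl with rfl | hl'
    · exact ⟨p1, h1⟩
    rcases eq_or_lt_of_le hr with rfl | hr'
    · exact ⟨q1, h2⟩
    obtain ⟨m0, hm0⟩ := exists_dm p0 q0
    obtain ⟨m1, hm1⟩ := exists_dm p1 q1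
    have hmem : ![m0, m1] ∈ S := step hS h1 h2 hm0 hm1
    have hb : p0 < m0 ∧ m0 < q0 := by unfold DM at hm0; omega
    rcases le_or_gt e m0 with h | h
    · exact ih p0 p1 m0 m1 e (by omega) h1 hmem (by omega) h
    · exact ih m0 m1 q0 q1 e (by omega) hmem h2 (by omega) (by omega)

/-- bisect to an exact second coordinate -/
theorem horizPoint (hS : CptClosed muOp S) : ∀ (n : ℕ) (p0 p1 q0 q1 e : ℤ), (q1 - p1).toNat ≤ n →
    ![p0, p1] ∈ S → ![q0, q1] ∈ S → p1 ≤ e → e ≤ q1 → ∃ x, ![x, e] ∈ S := by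
  intro n
  induction n with
  | zero => intro p0 p1 q0 q1 e hn h1 h2 hl hr
            have : p1 = e := by omega
            subst this; exact ⟨p0, h1⟩
  | succ n ih =>
    intro p0 p1 q0 q1 e hn h1 h2 hl hr
    rcases eq_or_lt_of_le hl with rfl | hl'
    · exact ⟨p0, h1⟩
    rcases eq_or_lt_of_le hr with rfl | hr'
    · exact ⟨q0, h2⟩
    obtain ⟨m0, hm0⟩ := exists_dm p0 q0
    obtain ⟨m1, hm1⟩ := exists_dm p1 q1
    have hmem : ![m0, m1] ∈ S := step hS h1 h2 hm0 hm1
    have hb : p1 < m1 ∧ m1 < q1 := by unfold DM at hm1; omega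
    rcases le_or_gt e m1 with h | h
    · exact ih p0 p1 m0 m1 e (by omega) h1 hmem (by omega) h
    · exact ih m0 m1 q0 q1 e (by omega) hmem h2 (by omega) (by omega)

/-- approximate diagonal point: sum in [e-1, e] -/
theorem diagPoint (hS : CptClosed muOp S) : ∀ (n : ℕ) (p0 p1 q0 q1 e : ℤ), (q0 + q1 - (p0 + p1)).toNat ≤ n →
    ![p0, p1] ∈ S → ![q0, q1] ∈ S → p0 + p1 ≤ e → e ≤ q0 + q1 →
    ∃ x y, ![x, y] ∈ S ∧ e - 1 ≤ x + y ∧ x + y ≤ e := by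
  intro n
  induction n with
  | zero => intro p0 p1 q0 q1 e hn h1 h2 hl hr
            exact ⟨p0, p1, h1, by omega, hl⟩
  | succ n ih =>
    intro p0 p1 q0 q1 e hn h1 h2 hl hr
    rcases le_or_gt (e - 1) (p0 + p1) with h | h
    · exact ⟨p0, p1, h1, h, hl⟩
    rcases le_or_gt (q0 + q1) e with h' | h'
    · exact ⟨q0, q1, h2, by omega, h'⟩
    -- gap ≥ 3
    obtain ⟨m0, hm0⟩ := exists_dm p0 q0
    obtain ⟨m1, hm1⟩ := exists_dm p1 q1
    have hmem : ![m0, m1] ∈ S := step hS h1 h2 hm0 hm1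
    have hb : p0 + p1 < m0 + m1 ∧ m0 + m1 < q0 + q1 := by
      unfold DM at hm0 hm1; omega
    rcases le_or_gt e (m0 + m1) with h'' | h''
    · exact ih p0 p1 m0 m1 e (by omega) h1 hmem hl h''
    · exact ih m0 m1 q0 q1 e (by omega) hmem h2 (by omega) hr

/-- approximate anti-diagonal point: difference in [e-1, e] -/
theorem adiagPoint (hS : CptClosed muOp S) : ∀ (n : ℕ) (p0 p1 q0 q1 e : ℤ), (q0 - q1 - (p0 - p1)).toNat ≤ n →
    ![p0, p1] ∈ S → ![q0, q1] ∈ S → p0 - p1 ≤ e → e ≤ q0 - q1 →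
    ∃ x y, ![x, y] ∈ S ∧ e - 1 ≤ x - y ∧ x - y ≤ e := by
  intro n
  induction n with
  | zero => intro p0 p1 q0 q1 e hn h1 h2 hl hr
            exact ⟨p0, p1, h1, by omega, hl⟩
  | succ n ih =>
    intro p0 p1 q0 q1 e hn h1 h2 hl hr
    rcases le_or_gt (e - 1) (p0 - p1) with h | h
    · exact ⟨p0, p1, h1, h, hl⟩
    rcases le_or_gt (q0 - q1) e with h' | h'
    · exact ⟨q0, q1, h2, by omega, h'⟩
    obtain ⟨m0, hm0⟩ := exists_dm p0 q0
    obtain ⟨m1, hm1⟩ := exists_dm p1 q1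
    have hmem : ![m0, m1] ∈ S := step hS h1 h2 hm0 hm1
    have hb : p0 - p1 < m0 - m1 ∧ m0 - m1 < q0 - q1 := by
      unfold DM at hm0 hm1; omega
    rcases le_or_gt e (m0 - m1) with h'' | h''
    · exact ih p0 p1 m0 m1 e (by omega) h1 hmem hl h''
    · exact ih m0 m1 q0 q1 e (by omega) hmem h2 (by omega) hr

theorem mu_eq {a b m : ℤ} (h : DM m a b) : muOp ![a, b] = m := by
  have := mu_spec a b; unfold DM at this h; omega


theorem col0 (x : Fin 2 → Fin 2 → ℤ) : (fun l => x l 0) = ![x 0 0, x 1 0] := by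
  funext l; fin_cases l <;> rfl
theorem col1 (x : Fin 2 → Fin 2 → ℤ) : (fun l => x l 1) = ![x 0 1, x 1 1] := by
  funext l; fin_cases l <;> rfl

theorem muOp_eta (g : Fin 2 → ℤ) : muOp g = muOp ![g 0, g 1] := by
  rw [← eta2]

/-- membership of computed μ point, general form -/
theorem mu_comp {S : Set (Fin 2 → ℤ)} (hS : CptClosed muOp S)
    (p q : Fin 2 → ℤ) (hp : p ∈ S) (hq : q ∈ S) :
    ![muOp ![p 0, q 0], muOp ![p 1, q 1]] ∈ S := by
  have h1 : p = ![p 0, p 1] := eta2 p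
  have h2 : q = ![q 0, q 1] := eta2 q
  rw [h1] at hp; rw [h2] at hq
  exact step hS hp hq (mu_spec _ _) (mu_spec _ _)

theorem closed_translate {S : Set (Fin 2 → ℤ)} (hS : CptClosed muOp S) (c d : ℤ) :
    CptClosed muOp {w : Fin 2 → ℤ | ![w 0 + c, w 1 + d] ∈ S} := by
  intro x hx
  have h0 := hx 0
  have h1 := hx 1
  simp only [Set.mem_setOf_eq] at h0 h1 ⊢
  rw [col0 x, col1 x]
  have hm0 := mu_spec (x 0 0) (x 1 0)
  have hm1 := mu_spec (x 0 1) (x 1 1)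
  have d0 : DM (muOp ![x 0 0, x 1 0] + c) (x 0 0 + c) (x 1 0 + c) := by
    unfold DM at hm0 ⊢; omega
  have d1 : DM (muOp ![x 0 1, x 1 1] + d) (x 0 1 + d) (x 1 1 + d) := by
    unfold DM at hm1 ⊢; omega
  exact step hS h0 h1 d0 d1

theorem closed_reflect {S : Set (Fin 2 → ℤ)} (hS : CptClosed muOp S) (c d : ℤ) :
    CptClosed muOp {w : Fin 2 → ℤ | ![c - w 0, d - w 1] ∈ S} := by
  intro x hx
  have h0 := hx 0
  have h1 := hx 1
  simp only [Set.mem_setOf_eq] at h0 h1 ⊢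
  rw [col0 x, col1 x]
  have hm0 := mu_spec (x 0 0) (x 1 0)
  have hm1 := mu_spec (x 0 1) (x 1 1)
  have d0 : DM (c - muOp ![x 0 0, x 1 0]) (c - x 0 0) (c - x 1 0) := by
    unfold DM at hm0 ⊢; omega
  have d1 : DM (d - muOp ![x 0 1, x 1 1]) (d - x 0 1) (d - x 1 1) := by
    unfold DM at hm1 ⊢; omega
  exact step hS h0 h1 d0 d1

theorem closed_swap_s17 {S : Set (Fin 2 → ℤ)} (hS : CptClosed muOp S) :
    CptClosed muOp {w : Fin 2 → ℤ | ![w 1, w 0] ∈ S} := by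
  intro x hx
  have h0 := hx 0
  have h1 := hx 1
  simp only [Set.mem_setOf_eq] at h0 h1 ⊢
  rw [col0 x, col1 x]
  exact step hS h0 h1 (mu_spec _ _) (mu_spec _ _)

/-- membership rewriting helpers -/
theorem mem_translate {S : Set (Fin 2 → ℤ)} (c d u v : ℤ) :
    (![u, v] ∈ {w : Fin 2 → ℤ | ![w 0 + c, w 1 + d] ∈ S}) ↔ ![u + c, v + d] ∈ S := by
  simp [Set.mem_setOf_eq]

theorem mem_reflect {S : Set (Fin 2 → ℤ)} (c d u v : ℤ) :
    (![u, v] ∈ {w : Fin 2 → ℤ | ![c - w 0, d - w 1] ∈ S}) ↔ ![c - u, d - v] ∈ S := by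
  simp [Set.mem_setOf_eq]

theorem mem_swap {S : Set (Fin 2 → ℤ)} (u v : ℤ) :
    (![u, v] ∈ {w : Fin 2 → ℤ | ![w 1, w 0] ∈ S}) ↔ ![v, u] ∈ S := by
  simp [Set.mem_setOf_eq]

/-- Corner lemma, diagonal orientation. -/
theorem cornerA : ∀ (n : ℕ) (a b : ℤ), a.toNat ≤ n → 0 ≤ b → b ≤ a →
    ∀ (S : Set (Fin 2 → ℤ)), CptClosed muOp S → ![(0:ℤ), (0:ℤ)] ∈ S → ![a, b] ∈ S →
    ![b, b] ∈ S := by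
  intro n
  induction n with
  | zero =>
    intro a b hn hb hba S hS hx hy
    have : a = 0 := by omega
    have : b = 0 := by omega
    subst this; simpa using hx
  | succ n ih =>
    intro a b hn hb hba S hS hx hy
    rcases eq_or_lt_of_le hba with rfl | hlt
    · exact hy
    rcases eq_or_lt_of_le hb with rfl | hbpos
    · exact hx
    -- now 1 ≤ b < a, so a ≥ 2
    obtain ⟨m1, hm1⟩ := exists_dm a 0
    obtain ⟨m2, hm2⟩ := exists_dm b 0
    have hm : ![m1, m2] ∈ S := step hS hy hx hm1 hm2
    have hb1 : a ≤ 2*m1 ∧ 2*m1 ≤ a + 1 := by unfold DM at hm1; omega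
    have hb2 : b ≤ 2*m2 ∧ 2*m2 ≤ b + 1 := by unfold DM at hm2; omega
    -- first recursive call: corner of (0, (m1, m2))
    have c1 : ![m2, m2] ∈ S := ih m1 m2 (by omega) (by omega) (by omega) S hS hx hm
    -- second recursive call on translated set
    have hS' := closed_translate hS m2 m2
    have hx' : ![(0:ℤ), (0:ℤ)] ∈ {w : Fin 2 → ℤ | ![w 0 + m2, w 1 + m2] ∈ S} := by
      rw [mem_translate]; simpa using c1
    have hy' : ![a - m2, b - m2] ∈ {w : Fin 2 → ℤ | ![w 0 + m2, w 1 + m2] ∈ S} := by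
      rw [mem_translate]
      have e : ![a - m2 + m2, b - m2 + m2] = ![a, b] := by norm_num
      rwa [e]
    have c2 := ih (a - m2) (b - m2) (by omega) (by omega) (by omega) _ hS' hx' hy'
    rw [mem_translate] at c2
    have e : ![b - m2 + m2, b - m2 + m2] = ![b, b] := by norm_num
    rwa [e] at c2

/-- Corner lemma, anti-diagonal orientation. -/
theorem cornerB : ∀ (n : ℕ) (a b : ℤ), a.toNat ≤ n → 0 ≤ b → b ≤ a →
    ∀ (S : Set (Fin 2 → ℤ)), CptClosed muOp S → ![(0:ℤ), (0:ℤ)] ∈ S → ![a, -b] ∈ S →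
    ![b, -b] ∈ S := by
  intro n
  induction n with
  | zero =>
    intro a b hn hb hba S hS hx hy
    have : a = 0 := by omega
    have : b = 0 := by omega
    subst this; simpa using hx
  | succ n ih =>
    intro a b hn hb hba S hS hx hy
    rcases eq_or_lt_of_le hba with rfl | hlt
    · exact hy
    rcases eq_or_lt_of_le hb with rfl | hbpos
    · simpa using hx
    obtain ⟨m1, hm1⟩ := exists_dm a 0
    obtain ⟨m2, hm2⟩ := exists_dm (-b) 0
    have hm : ![m1, m2] ∈ S := step hS hy hx hm1 hm2
    have hb1 : a ≤ 2*m1 ∧ 2*m1 ≤ a + 1 := by unfold DM at hm1; omega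
    have hb2 : -b - 1 ≤ 2*m2 ∧ 2*m2 ≤ -b := by unfold DM at hm2; omega
    -- first recursive call: corner of (0, (m1, m2)) with b' = -m2
    have hm' : ![m1, -(-m2)] ∈ S := by simpa using hm
    have c1 : ![-m2, -(-m2)] ∈ S := ih m1 (-m2) (by omega) (by omega) (by omega) S hS hx hm'
    have c1' : ![-m2, m2] ∈ S := by simpa using c1
    -- second recursive call on translated set by (-m2, m2)
    have hS' := closed_translate hS (-m2) m2
    have hx' : ![(0:ℤ), (0:ℤ)] ∈ {w : Fin 2 → ℤ | ![w 0 + -m2, w 1 + m2] ∈ S} := by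
      rw [mem_translate]; simpa using c1'
    have hy' : ![a + m2, -(b + m2)] ∈ {w : Fin 2 → ℤ | ![w 0 + -m2, w 1 + m2] ∈ S} := by
      rw [mem_translate]
      have e : ![a + m2 + -m2, -(b + m2) + m2] = ![a, -b] := by norm_num
      rwa [e]
    have c2 := ih (a + m2) (b + m2) (by omega) (by omega) (by omega) _ hS' hx' hy'
    rw [mem_translate] at c2
    have e : ![b + m2 + -m2, -(b + m2) + m2] = ![b, -b] := by norm_num
    rwa [e] at c2

/-- Pair lemma, canonical diagonal orientation. -/
theorem pairA {S : Set (Fin 2 → ℤ)} (hS : CptClosed muOp S)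
    (a b : ℤ) (hx : ![(0:ℤ), (0:ℤ)] ∈ S) (hy : ![a, b] ∈ S)
    (hb : 0 ≤ b) (hba : b ≤ a) (u v : ℤ)
    (h1 : 0 ≤ v) (h2 : v ≤ b) (h3 : v ≤ u) (h4 : u - v ≤ a - b) : ![u, v] ∈ S := by
  have c1 : ![b, b] ∈ S := cornerA a.toNat a b le_rfl hb hba S hS hx hy
  -- reflected set for the other corner
  have hS' := closed_reflect hS a b
  have hx' : ![(0:ℤ), (0:ℤ)] ∈ {w : Fin 2 → ℤ | ![a - w 0, b - w 1] ∈ S} := by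
    rw [mem_reflect]; simpa using hy
  have hy' : ![a, b] ∈ {w : Fin 2 → ℤ | ![a - w 0, b - w 1] ∈ S} := by
    rw [mem_reflect]; simpa using hx
  have c2' := cornerA a.toNat a b le_rfl hb hba _ hS' hx' hy'
  rw [mem_reflect] at c2'
  -- c2' : ![a - b, b - b] = ![a - b, 0]
  have c2 : ![a - b, (0:ℤ)] ∈ S := by
    have e : ![a - b, b - b] = ![a - b, (0:ℤ)] := by norm_num
    rwa [e] at c2'
  -- left edge point (v, v)
  have lv : ![v, v] ∈ S := by
    have h := diagFill hS b.toNat 0 0 b v (by omega) (by simpa using hx) (by simpa using c1)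
      (by omega) (by omega)
    simpa using h
  -- right edge point (v + (a - b), v)
  have rv : ![v + (a - b), v] ∈ S := by
    have h0 : ![(0:ℤ) + (a - b), (0:ℤ)] ∈ S := by
      have e : ![(0:ℤ) + (a - b), (0:ℤ)] = ![a - b, (0:ℤ)] := by norm_num
      rwa [e]
    have hbb : ![b + (a - b), b] ∈ S := by
      have e : ![b + (a - b), b] = ![a, b] := by norm_num
      rwa [e]
    exact diagFill hS b.toNat (a - b) 0 b v (by omega) h0 hbb (by omega) (by omega)
  exact rowFill hS (a - b).toNat v (v + (a-b)) v u (by omega) lv rv (by omega) (by omega)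

/-- Pair lemma, canonical anti-diagonal orientation. -/
theorem pairB {S : Set (Fin 2 → ℤ)} (hS : CptClosed muOp S)
    (a b : ℤ) (hx : ![(0:ℤ), (0:ℤ)] ∈ S) (hy : ![a, -b] ∈ S)
    (hb : 0 ≤ b) (hba : b ≤ a) (u v : ℤ)
    (h1 : -b ≤ v) (h2 : v ≤ 0) (h3 : 0 ≤ u + v) (h4 : u + v ≤ a - b) : ![u, v] ∈ S := by
  have c1 : ![b, -b] ∈ S := cornerB a.toNat a b le_rfl hb hba S hS hx hy
  have hS' := closed_reflect hS a (-b)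
  have hx' : ![(0:ℤ), (0:ℤ)] ∈ {w : Fin 2 → ℤ | ![a - w 0, -b - w 1] ∈ S} := by
    rw [mem_reflect]; simpa using hy
  have hy' : ![a, -b] ∈ {w : Fin 2 → ℤ | ![a - w 0, -b - w 1] ∈ S} := by
    rw [mem_reflect]
    have e : ![a - a, -b - -b] = ![(0:ℤ), (0:ℤ)] := by norm_num
    rwa [e]
  have c2' := cornerB a.toNat a b le_rfl hb hba _ hS' hx' hy'
  rw [mem_reflect] at c2'
  have c2 : ![a - b, (0:ℤ)] ∈ S := by
    have e : ![a - b, -b - -b] = ![a - b, (0:ℤ)] := by norm_num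
    rwa [e] at c2'
  -- left edge point (-v, v) : anti-diagonal from (0,0) to (b, -b), c = 0
  have lv : ![-v, v] ∈ S := by
    have h := adiagFill hS b.toNat 0 0 b (-v) (by omega) (by simpa using hx)
      (by simpa using c1) (by omega) (by omega)
    have e : ![-v, 0 - -v] = ![-v, v] := by norm_num
    rwa [e] at h
  -- right edge point (a - b - v, v) : anti-diagonal from (a-b, 0) to (a, -b), c = a - b
  have rv : ![a - b - v, v] ∈ S := by
    have h0 : ![a - b, a - b - (a - b)] ∈ S := by
      have e : ![a - b, a - b - (a - b)] = ![a - b, (0:ℤ)] := by norm_num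
      rwa [e]
    have hbb : ![a, a - b - a] ∈ S := by
      have e : ![a, a - b - a] = ![a, -b] := by norm_num
      rwa [e]
    have h := adiagFill hS b.toNat (a - b) (a - b) a (a - b - v) (by omega) h0 hbb
      (by omega) (by omega)
    have e : ![a - b - v, a - b - (a - b - v)] = ![a - b - v, v] := by norm_num
    rwa [e] at h
  exact rowFill hS (a - b).toNat (-v) (a - b - v) v u (by omega) lv rv (by omega) (by omega)

/-- General pair lemma: octagonal hull of two points of S is in S. -/
theorem pairG {S : Set (Fin 2 → ℤ)} (hS : CptClosed muOp S)
    (p0 p1 q0 q1 u v : ℤ) (hp : ![p0, p1] ∈ S) (hq : ![q0, q1] ∈ S)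
    (c1 : min p0 q0 ≤ u) (c2 : u ≤ max p0 q0)
    (c3 : min p1 q1 ≤ v) (c4 : v ≤ max p1 q1)
    (c5 : min (p0 + p1) (q0 + q1) ≤ u + v) (c6 : u + v ≤ max (p0 + p1) (q0 + q1))
    (c7 : min (p0 - p1) (q0 - q1) ≤ u - v) (c8 : u - v ≤ max (p0 - p1) (q0 - q1)) :
    ![u, v] ∈ S := by
  -- translate so that p = 0
  set T : Set (Fin 2 → ℤ) := {w : Fin 2 → ℤ | ![w 0 + p0, w 1 + p1] ∈ S} with hT
  have hST : CptClosed muOp T := closed_translate hS p0 p1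
  have hxT : ![(0:ℤ), (0:ℤ)] ∈ T := by
    rw [hT, mem_translate]
    have e : ![(0:ℤ) + p0, (0:ℤ) + p1] = ![p0, p1] := by norm_num
    rwa [e]
  set A := q0 - p0 with hA
  set B := q1 - p1 with hB
  have hyT : ![A, B] ∈ T := by
    rw [hT, mem_translate]
    have e : ![A + p0, B + p1] = ![q0, q1] := by rw [hA, hB]; norm_num
    rwa [e]
  set U := u - p0 with hU
  set V := v - p1 with hV
  have goal_eq : ![u, v] ∈ S ↔ ![U, V] ∈ T := by
    rw [hT, mem_translate]
    constructor
    · intro h; have e : ![U + p0, V + p1] = ![u, v] := by rw [hU, hV]; norm_num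
      rwa [e]
    · intro h; have e : ![U + p0, V + p1] = ![u, v] := by rw [hU, hV]; norm_num
      rwa [e] at h
  rw [goal_eq]
  clear goal_eq hp hq
  -- the 8 region cases
  rcases le_or_gt 0 A with hA0 | hA0 <;> rcases le_or_gt 0 B with hB0 | hB0
  · -- A ≥ 0, B ≥ 0
    rcases le_or_gt B A with hord | hord
    · exact pairA hST A B hxT hyT (by omega) hord U V (by omega) (by omega) (by omega) (by omega)
    · -- swap
      have hSσ := closed_swap_s17 hST
      have hxσ : ![(0:ℤ), (0:ℤ)] ∈ {w : Fin 2 → ℤ | ![w 1, w 0] ∈ T} := by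
        rw [mem_swap]; exact hxT
      have hyσ : ![B, A] ∈ {w : Fin 2 → ℤ | ![w 1, w 0] ∈ T} := by
        rw [mem_swap]; exact hyT
      have h := pairA hSσ B A hxσ hyσ (by omega) (by omega) V U
        (by omega) (by omega) (by omega) (by omega)
      rwa [mem_swap] at h
  · -- A ≥ 0, B < 0 : anti-diagonal orientations
    rcases le_or_gt (-B) A with hord | hord
    · exact pairB hST A (-B) hxT (by simpa using hyT) (by omega) hord U V
        (by omega) (by omega) (by omega) (by omega)
    · -- swap + reflect:  Sc = {w | ![-w1, -w0] ∈ T}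
      have hSσ := closed_swap_s17 hST
      have hSc := closed_reflect hSσ 0 0
      -- membership in the composite
      have memc : ∀ x y : ℤ, (![x, y] ∈ {w : Fin 2 → ℤ | ![(0:ℤ) - w 0, (0:ℤ) - w 1] ∈ {w : Fin 2 → ℤ | ![w 1, w 0] ∈ T}}) ↔ ![-y, -x] ∈ T := by
        intro x y
        rw [mem_reflect]
        have e : ![(0:ℤ) - x, (0:ℤ) - y] = ![-x, -y] := by norm_num
        rw [e, mem_swap]
      have hxc : ![(0:ℤ), (0:ℤ)] ∈ _ := (memc 0 0).2 (by simpa using hxT)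
      have hyc : ![-B, -A] ∈ _ := (memc (-B) (-A)).2 (by simpa using hyT)
      have hyc' : ![-B, -(A)] ∈ _ := hyc
      have h := pairB hSc (-B) A hxc (by simpa using hyc) (by omega) (by omega) (-V) (-U)
        (by omega) (by omega) (by omega) (by omega)
      have h' := (memc (-V) (-U)).1 h
      simpa using h'
  · -- A < 0, B ≥ 0
    rcases le_or_gt B (-A) with hord | hord
    · -- reflect (negate both):  {w | ![-w0, -w1] ∈ T}
      have hSν := closed_reflect hST 0 0
      have memν : ∀ x y : ℤ, (![x, y] ∈ {w : Fin 2 → ℤ | ![(0:ℤ) - w 0, (0:ℤ) - w 1] ∈ T}) ↔ ![-x, -y] ∈ T := by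
        intro x y
        rw [mem_reflect]
        have e : ![(0:ℤ) - x, (0:ℤ) - y] = ![-x, -y] := by norm_num
        rw [e]
      have hxν := (memν 0 0).2 (by simpa using hxT)
      have hyν := (memν (-A) (-B)).2 (by simpa using hyT)
      have h := pairB hSν (-A) B hxν (by simpa using hyν) (by omega) hord (-U) (-V)
        (by omega) (by omega) (by omega) (by omega)
      have h' := (memν (-U) (-V)).1 h
      simpa using h'
    · -- swap
      have hSσ := closed_swap_s17 hST
      have hxσ : ![(0:ℤ), (0:ℤ)] ∈ {w : Fin 2 → ℤ | ![w 1, w 0] ∈ T} := by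
        rw [mem_swap]; exact hxT
      have hyσ : ![B, A] ∈ {w : Fin 2 → ℤ | ![w 1, w 0] ∈ T} := by
        rw [mem_swap]; exact hyT
      have h := pairB hSσ B (-A) hxσ (by simpa using hyσ) (by omega) (by omega) V U
        (by omega) (by omega) (by omega) (by omega)
      rwa [mem_swap] at h
  · -- A < 0, B < 0
    rcases le_or_gt A B with hord | hord
    · -- negate both, then pairA with (a,b) = (-A, -B)
      have hSν := closed_reflect hST 0 0
      have memν : ∀ x y : ℤ, (![x, y] ∈ {w : Fin 2 → ℤ | ![(0:ℤ) - w 0, (0:ℤ) - w 1] ∈ T}) ↔ ![-x, -y] ∈ T := by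
        intro x y
        rw [mem_reflect]
        have e : ![(0:ℤ) - x, (0:ℤ) - y] = ![-x, -y] := by norm_num
        rw [e]
      have hxν := (memν 0 0).2 (by simpa using hxT)
      have hyν := (memν (-A) (-B)).2 (by simpa using hyT)
      have h := pairA hSν (-A) (-B) hxν hyν (by omega) (by omega) (-U) (-V)
        (by omega) (by omega) (by omega) (by omega)
      have h' := (memν (-U) (-V)).1 h
      simpa using h'
    · -- negate + swap, pairA with (a,b) = (-B, -A)
      have hSσ := closed_swap_s17 hST
      have hSc := closed_reflect hSσ 0 0
      have memc : ∀ x y : ℤ, (![x, y] ∈ {w : Fin 2 → ℤ | ![(0:ℤ) - w 0, (0:ℤ) - w 1] ∈ {w : Fin 2 → ℤ | ![w 1, w 0] ∈ T}}) ↔ ![-y, -x] ∈ T := by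
        intro x y
        rw [mem_reflect]
        have e : ![(0:ℤ) - x, (0:ℤ) - y] = ![-x, -y] := by norm_num
        rw [e, mem_swap]
      have hxc := (memc 0 0).2 (by simpa using hxT)
      have hyc := (memc (-B) (-A)).2 (by simpa using hyT)
      have h := pairA hSc (-B) (-A) hxc hyc (by omega) (by omega) (-V) (-U)
        (by omega) (by omega) (by omega) (by omega)
      have h' := (memc (-V) (-U)).1 h
      simpa using h'

/-- helper for applying pairG from a conjunction -/
theorem pairG' {S : Set (Fin 2 → ℤ)} (hS : CptClosed muOp S)
    {p0 p1 q0 q1 u v : ℤ} (hp : ![p0, p1] ∈ S) (hq : ![q0, q1] ∈ S)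
    (h : min p0 q0 ≤ u ∧ u ≤ max p0 q0 ∧ min p1 q1 ≤ v ∧ v ≤ max p1 q1 ∧
      min (p0 + p1) (q0 + q1) ≤ u + v ∧ u + v ≤ max (p0 + p1) (q0 + q1) ∧
      min (p0 - p1) (q0 - q1) ≤ u - v ∧ u - v ≤ max (p0 - p1) (q0 - q1)) :
    ![u, v] ∈ S :=
  pairG hS p0 p1 q0 q1 u v hp hq h.1 h.2.1 h.2.2.1 h.2.2.2.1 h.2.2.2.2.1
    h.2.2.2.2.2.1 h.2.2.2.2.2.2.1 h.2.2.2.2.2.2.2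

/-- Assembly: the eight directional witnesses force membership. -/
theorem assemble {S : Set (Fin 2 → ℤ)} (hS : CptClosed muOp S) (u v : ℤ)
    (w1 : ∃ s0 s1, ![s0, s1] ∈ S ∧ s0 ≤ u)
    (w2 : ∃ s0 s1, ![s0, s1] ∈ S ∧ u ≤ s0)
    (w3 : ∃ s0 s1, ![s0, s1] ∈ S ∧ s1 ≤ v)
    (w4 : ∃ s0 s1, ![s0, s1] ∈ S ∧ v ≤ s1)
    (w5 : ∃ s0 s1, ![s0, s1] ∈ S ∧ s0 + s1 ≤ u + v)
    (w6 : ∃ s0 s1, ![s0, s1] ∈ S ∧ u + v ≤ s0 + s1)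
    (w7 : ∃ s0 s1, ![s0, s1] ∈ S ∧ s0 - s1 ≤ u - v)
    (w8 : ∃ s0 s1, ![s0, s1] ∈ S ∧ u - v ≤ s0 - s1) : ![u, v] ∈ S := by
  obtain ⟨a0, a1, ha, hau⟩ := w1
  obtain ⟨b0, b1, hb, hbu⟩ := w2
  obtain ⟨c0, c1, hc, hcv⟩ := w3
  obtain ⟨d0, d1, hd, hdv⟩ := w4
  obtain ⟨e0, e1, he, heu⟩ := w5
  obtain ⟨f0, f1, hf, hfu⟩ := w6
  obtain ⟨g0, g1, hg, hgu⟩ := w7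
  obtain ⟨k0, k1, hk, hku⟩ := w8
  obtain ⟨α, hU⟩ := vertPoint hS (b0 - a0).toNat a0 a1 b0 b1 u le_rfl ha hb hau hbu
  obtain ⟨β, hV⟩ := horizPoint hS (d1 - c1).toNat c0 c1 d0 d1 v le_rfl hc hd hcv hdv
  rcases lt_trichotomy α v with hA | hA | hA
  · -- α < v
    rcases lt_trichotomy β u with hB | hB | hB
    · -- β < u : use W' (sum in [u+v, u+v+1])
      have hW' : ∃ W0 W1, ![W0, W1] ∈ S ∧ u + v ≤ W0 + W1 ∧ W0 + W1 ≤ u + v + 1 := by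
        rcases le_or_gt (f0 + f1) (u + v + 1) with h | h
        · exact ⟨f0, f1, hf, hfu, h⟩
        · obtain ⟨x, y, hxy, h1, h2⟩ :=
            diagPoint hS (f0 + f1 - (e0 + e1)).toNat e0 e1 f0 f1 (u + v + 1) le_rfl he hf
              (by omega) (by omega)
          exact ⟨x, y, hxy, by omega, h2⟩
      obtain ⟨W0, W1, hW, h1, h2⟩ := hW'
      have cov : (min u W0 ≤ u ∧ u ≤ max u W0 ∧ min α W1 ≤ v ∧ v ≤ max α W1 ∧
          min (u + α) (W0 + W1) ≤ u + v ∧ u + v ≤ max (u + α) (W0 + W1) ∧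
          min (u - α) (W0 - W1) ≤ u - v ∧ u - v ≤ max (u - α) (W0 - W1)) ∨
          (min β W0 ≤ u ∧ u ≤ max β W0 ∧ min v W1 ≤ v ∧ v ≤ max v W1 ∧
          min (β + v) (W0 + W1) ≤ u + v ∧ u + v ≤ max (β + v) (W0 + W1) ∧
          min (β - v) (W0 - W1) ≤ u - v ∧ u - v ≤ max (β - v) (W0 - W1)) := by omega
      rcases cov with h | h
      · exact pairG' hS hU hW h
      · exact pairG' hS hV hW h

    · subst hB; exact hV
    · -- β > u : use X (diff in [u-v-1, u-v])
      obtain ⟨X0, X1, hX, h1, h2⟩ :=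
        adiagPoint hS (k0 - k1 - (g0 - g1)).toNat g0 g1 k0 k1 (u - v) le_rfl hg hk hgu hku
      have cov : (min u X0 ≤ u ∧ u ≤ max u X0 ∧ min α X1 ≤ v ∧ v ≤ max α X1 ∧
          min (u + α) (X0 + X1) ≤ u + v ∧ u + v ≤ max (u + α) (X0 + X1) ∧
          min (u - α) (X0 - X1) ≤ u - v ∧ u - v ≤ max (u - α) (X0 - X1)) ∨
          (min β X0 ≤ u ∧ u ≤ max β X0 ∧ min v X1 ≤ v ∧ v ≤ max v X1 ∧
          min (β + v) (X0 + X1) ≤ u + v ∧ u + v ≤ max (β + v) (X0 + X1) ∧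
          min (β - v) (X0 - X1) ≤ u - v ∧ u - v ≤ max (β - v) (X0 - X1)) := by omega
      rcases cov with h | h
      · exact pairG' hS hU hX h
      · exact pairG' hS hV hX h

  · subst hA; exact hU
  · -- v < α
    rcases lt_trichotomy β u with hB | hB | hB
    · -- β < u : use X' (diff in [u-v, u-v+1])
      have hX' : ∃ X0 X1, ![X0, X1] ∈ S ∧ u - v ≤ X0 - X1 ∧ X0 - X1 ≤ u - v + 1 := by
        rcases le_or_gt (k0 - k1) (u - v + 1) with h | h
        · exact ⟨k0, k1, hk, hku, h⟩
        · obtain ⟨x, y, hxy, h1, h2⟩ :=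
            adiagPoint hS (k0 - k1 - (g0 - g1)).toNat g0 g1 k0 k1 (u - v + 1) le_rfl hg hk
              (by omega) (by omega)
          exact ⟨x, y, hxy, by omega, h2⟩
      obtain ⟨X0, X1, hX, h1, h2⟩ := hX'
      have cov : (min u X0 ≤ u ∧ u ≤ max u X0 ∧ min α X1 ≤ v ∧ v ≤ max α X1 ∧
          min (u + α) (X0 + X1) ≤ u + v ∧ u + v ≤ max (u + α) (X0 + X1) ∧
          min (u - α) (X0 - X1) ≤ u - v ∧ u - v ≤ max (u - α) (X0 - X1)) ∨
          (min β X0 ≤ u ∧ u ≤ max β X0 ∧ min v X1 ≤ v ∧ v ≤ max v X1 ∧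
          min (β + v) (X0 + X1) ≤ u + v ∧ u + v ≤ max (β + v) (X0 + X1) ∧
          min (β - v) (X0 - X1) ≤ u - v ∧ u - v ≤ max (β - v) (X0 - X1)) := by omega
      rcases cov with h | h
      · exact pairG' hS hU hX h
      · exact pairG' hS hV hX h

    · subst hB; exact hV
    · -- β > u : use W (sum in [u+v-1, u+v])
      obtain ⟨W0, W1, hW, h1, h2⟩ :=
        diagPoint hS (f0 + f1 - (e0 + e1)).toNat e0 e1 f0 f1 (u + v) le_rfl he hf heu hfu
      have cov : (min u W0 ≤ u ∧ u ≤ max u W0 ∧ min α W1 ≤ v ∧ v ≤ max α W1 ∧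
          min (u + α) (W0 + W1) ≤ u + v ∧ u + v ≤ max (u + α) (W0 + W1) ∧
          min (u - α) (W0 - W1) ≤ u - v ∧ u - v ≤ max (u - α) (W0 - W1)) ∨
          (min β W0 ≤ u ∧ u ≤ max β W0 ∧ min v W1 ≤ v ∧ v ≤ max v W1 ∧
          min (β + v) (W0 + W1) ≤ u + v ∧ u + v ≤ max (β + v) (W0 + W1) ∧
          min (β - v) (W0 - W1) ≤ u - v ∧ u - v ≤ max (β - v) (W0 - W1)) := by omega
      rcases cov with h | h
      · exact pairG' hS hU hW h
      · exact pairG' hS hV hW h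

theorem ncard_fin2_le (P : Set (Fin 2)) : P.ncard ≤ 2 := by
  have h := Set.ncard_le_ncard (Set.subset_univ P) Set.finite_univ
  simpa [Set.ncard_univ] using h

theorem dir_bound {S : Set (Fin 2 → ℤ)} (hne : S.Nonempty) (c d : ℤ) :
    ∃ (row : Fin 2 → ℤ) (β : ℝ), (row = ![c, d] ∨ row = ![0, 0]) ∧
      (∀ s ∈ S, β ≤ ((row 0 * s 0 + row 1 * s 1 : ℤ) : ℝ)) ∧
      (∀ x : Fin 2 → ℤ, β ≤ ((row 0 * x 0 + row 1 * x 1 : ℤ) : ℝ) →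
        ∃ s ∈ S, c * s 0 + d * s 1 ≤ c * x 0 + d * x 1) := by
  by_cases hbdd : BddBelow {t : ℤ | ∃ s ∈ S, c * s 0 + d * s 1 = t}
  · obtain ⟨m, hmT, hmin⟩ := Int.exists_least_of_bdd
      (by obtain ⟨bb, hb⟩ := hbdd; exact ⟨bb, fun z hz => hb hz⟩)
      (by obtain ⟨s, hs⟩ := hne; exact ⟨c * s 0 + d * s 1, s, hs, rfl⟩)
    refine ⟨![c, d], (m : ℝ), Or.inl rfl, ?_, ?_⟩
    · intro s hs
      have h : m ≤ c * s 0 + d * s 1 := hmin _ ⟨s, hs, rfl⟩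
      have e : (![c, d] : Fin 2 → ℤ) 0 = c := rfl
      have e' : (![c, d] : Fin 2 → ℤ) 1 = d := rfl
      rw [e, e']
      exact_mod_cast h
    · intro x hx
      obtain ⟨s, hs, hval⟩ := hmT
      have e : (![c, d] : Fin 2 → ℤ) 0 = c := rfl
      have e' : (![c, d] : Fin 2 → ℤ) 1 = d := rfl
      rw [e, e'] at hx
      have hx' : m ≤ c * x 0 + d * x 1 := by exact_mod_cast hx
      exact ⟨s, hs, by omega⟩
  · refine ⟨![0, 0], 0, Or.inr rfl, ?_, ?_⟩
    · intro s hs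
      have e : ((0 : ℤ) * s 0 + (0 : ℤ) * s 1 : ℤ) = 0 := by ring
      have e0 : (![(0:ℤ), 0] : Fin 2 → ℤ) 0 = 0 := rfl
      have e1 : (![(0:ℤ), 0] : Fin 2 → ℤ) 1 = 0 := rfl
      rw [e0, e1, e]; norm_num
    · intro x _
      have h : ¬ (c * x 0 + d * x 1) ∈ lowerBounds {t : ℤ | ∃ s ∈ S, c * s 0 + d * s 1 = t} := by
        intro hmem; exact hbdd ⟨_, hmem⟩
      simp only [lowerBounds, Set.mem_setOf_eq, not_forall] at h
      obtain ⟨t, ht, hlt⟩ := h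
      obtain ⟨s, hs, rfl⟩ := ht
      exact ⟨s, hs, by omega⟩

/-- a `μ`-closed subset of `ℤ²` is representable by a UTVPI system. -/
theorem stmt_17 (S : Set (Fin 2 → ℤ)) (h : CptClosed muOp S) :
    RepUTVPI S := by
  rcases S.eq_empty_or_nonempty with rfl | hne
  · -- empty set : x₀ ≥ 1 and -x₀ ≥ 0
    refine ⟨2, Matrix.of ![![1, 0], ![-1, 0]], ![1, 0], ?_, ?_, ?_⟩
    · intro i j; fin_cases i <;> fin_cases j <;> simp
    · intro i; exact ncard_fin2_le _
    · ext x
      simp only [Set.mem_empty_iff_false, Set.mem_setOf_eq, false_iff, not_forall]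
      by_contra hcon
      push_neg at hcon
      have h0 := hcon 0
      have h1 := hcon 1
      rw [Fin.sum_univ_two] at h0 h1
      simp only [Matrix.of_apply, Matrix.cons_val', Matrix.cons_val_zero, Matrix.cons_val_one,
        Matrix.head_cons, Matrix.empty_val', Matrix.cons_val_fin_one, Matrix.head_fin_const] at h0 h1
      have h0' : (1 : ℤ) ≤ 1 * x 0 + 0 * x 1 := by exact_mod_cast h0
      have h1' : (0 : ℤ) ≤ -1 * x 0 + 0 * x 1 := by exact_mod_cast h1
      omega
  · obtain ⟨r1, β1, hu1, hs1, hw1⟩ := dir_bound hne 1 0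
    obtain ⟨r2, β2, hu2, hs2, hw2⟩ := dir_bound hne (-1) 0
    obtain ⟨r3, β3, hu3, hs3, hw3⟩ := dir_bound hne 0 1
    obtain ⟨r4, β4, hu4, hs4, hw4⟩ := dir_bound hne 0 (-1)
    obtain ⟨r5, β5, hu5, hs5, hw5⟩ := dir_bound hne 1 1
    obtain ⟨r6, β6, hu6, hs6, hw6⟩ := dir_bound hne (-1) (-1)
    obtain ⟨r7, β7, hu7, hs7, hw7⟩ := dir_bound hne 1 (-1)
    obtain ⟨r8, β8, hu8, hs8, hw8⟩ := dir_bound hne (-1) 1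
    refine ⟨8, Matrix.of ![r1, r2, r3, r4, r5, r6, r7, r8], ![β1, β2, β3, β4, β5, β6, β7, β8],
      ?_, ?_, ?_⟩
    · intro i j
      fin_cases i <;>
        [(show r1 j = 0 ∨ r1 j = -1 ∨ r1 j = 1; rcases hu1 with h' | h');
         (show r2 j = 0 ∨ r2 j = -1 ∨ r2 j = 1; rcases hu2 with h' | h');
         (show r3 j = 0 ∨ r3 j = -1 ∨ r3 j = 1; rcases hu3 with h' | h');
         (show r4 j = 0 ∨ r4 j = -1 ∨ r4 j = 1; rcases hu4 with h' | h');
         (show r5 j = 0 ∨ r5 j = -1 ∨ r5 j = 1; rcases hu5 with h' | h');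
         (show r6 j = 0 ∨ r6 j = -1 ∨ r6 j = 1; rcases hu6 with h' | h');
         (show r7 j = 0 ∨ r7 j = -1 ∨ r7 j = 1; rcases hu7 with h' | h');
         (show r8 j = 0 ∨ r8 j = -1 ∨ r8 j = 1; rcases hu8 with h' | h')] <;>
        (rw [h']; fin_cases j <;> norm_num)
    · intro i; exact ncard_fin2_le _
    · ext x
      constructor
      · intro hx i
        fin_cases i <;> rw [Fin.sum_univ_two] <;>
          [exact hs1 x hx; exact hs2 x hx; exact hs3 x hx; exact hs4 x hx;
           exact hs5 x hx; exact hs6 x hx; exact hs7 x hx; exact hs8 x hx]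
      · intro hx
        simp only [Set.mem_setOf_eq] at hx
        have get : ∀ i : Fin 8, ![β1, β2, β3, β4, β5, β6, β7, β8] i ≤
            (((Matrix.of ![r1, r2, r3, r4, r5, r6, r7, r8]) i 0 * x 0 +
              (Matrix.of ![r1, r2, r3, r4, r5, r6, r7, r8]) i 1 * x 1 : ℤ) : ℝ) := by
          intro i
          have := hx i
          rwa [Fin.sum_univ_two] at this
        have g1 : β1 ≤ ((r1 0 * x 0 + r1 1 * x 1 : ℤ) : ℝ) := get 0
        have g2 : β2 ≤ ((r2 0 * x 0 + r2 1 * x 1 : ℤ) : ℝ) := get 1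
        have g3 : β3 ≤ ((r3 0 * x 0 + r3 1 * x 1 : ℤ) : ℝ) := get 2
        have g4 : β4 ≤ ((r4 0 * x 0 + r4 1 * x 1 : ℤ) : ℝ) := get 3
        have g5 : β5 ≤ ((r5 0 * x 0 + r5 1 * x 1 : ℤ) : ℝ) := get 4
        have g6 : β6 ≤ ((r6 0 * x 0 + r6 1 * x 1 : ℤ) : ℝ) := get 5
        have g7 : β7 ≤ ((r7 0 * x 0 + r7 1 * x 1 : ℤ) : ℝ) := get 6
        have g8 : β8 ≤ ((r8 0 * x 0 + r8 1 * x 1 : ℤ) : ℝ) := get 7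
        obtain ⟨s1', hs1', hv1⟩ := hw1 x g1
        obtain ⟨s2', hs2', hv2⟩ := hw2 x g2
        obtain ⟨s3', hs3', hv3⟩ := hw3 x g3
        obtain ⟨s4', hs4', hv4⟩ := hw4 x g4
        obtain ⟨s5', hs5', hv5⟩ := hw5 x g5
        obtain ⟨s6', hs6', hv6⟩ := hw6 x g6
        obtain ⟨s7', hs7', hv7⟩ := hw7 x g7
        obtain ⟨s8', hs8', hv8⟩ := hw8 x g8
        rw [eta2 x]
        exact assemble h (x 0) (x 1)
          ⟨s1' 0, s1' 1, by rw [← eta2]; exact hs1', by omega⟩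
          ⟨s2' 0, s2' 1, by rw [← eta2]; exact hs2', by omega⟩
          ⟨s3' 0, s3' 1, by rw [← eta2]; exact hs3', by omega⟩
          ⟨s4' 0, s4' 1, by rw [← eta2]; exact hs4', by omega⟩
          ⟨s5' 0, s5' 1, by rw [← eta2]; exact hs5', by omega⟩
          ⟨s6' 0, s6' 1, by rw [← eta2]; exact hs6', by omega⟩
          ⟨s7' 0, s7' 1, by rw [← eta2]; exact hs7', by omega⟩
          ⟨s8' 0, s8' 1, by rw [← eta2]; exact hs8', by omega⟩
end

section
/- Let n ≥ 2 and S ⊆ ℤ^n. Consider the properties: (i) S is closed under some majority operation; (ii) there exist majority operations f_1, …, f_n such that for all x, y, z ∈ S the vector whose i-th coordinate is f_i(x_i, y_i, z_i) belongs to S; (iii) S is strongly closed under the partial majority operation maj_p; (iv) S is 2-decomposable; (v) S is weakly closed under maj_p. For each property, its hereditary version requires that for every subset I ⊆ {1,…,n} with |I| ≥ 2, the projection π_I(S) ⊆ ℤ^I satisfies the property (with, in (ii), majority operations associated with the coordinates in I). Then (i) ⇒ (ii) ⇒ (iii) ⇒ (iv) ⇒ (v); moreover (i) is equivalent to its hereditary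 version, (ii) is equivalent to its hereditary version, and the hereditary versions of (iii), (iv), (v) are all equivalent to (iii). -/
/-- The value of the partial majority operation `maj_p` at `(a,b,c)` (meaningful
whenever at least two of the arguments coincide). -/
def majVal (a b c : ℤ) : ℤ := if a = b then a else if a = c then a else b

/-- The domain condition of the partial majority operation `maj_p`. -/
def majDom (a b c : ℤ) : Prop := a = b ∨ a = c ∨ b = c

/-- (ii): there are majority operations `f_i`, one for each coordinate, such that `S`
is closed under their componentwise application. -/
def CoordMajClosed {ι : Type*} (S : Set (ι → ℤ)) : Prop :=
  ∃ f : ι → (Fin 3 → ℤ) → ℤ, (∀ i, IsMajorityOp (f i)) ∧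
    ∀ x ∈ S, ∀ y ∈ S, ∀ z ∈ S, (fun i => f i ![x i, y i, z i]) ∈ S

/-- (iii): `S` is strongly closed under the partial majority operation `maj_p`. -/
def StronglyMajPClosed {ι : Type*} (S : Set (ι → ℤ)) : Prop :=
  ∀ x ∈ S, ∀ y ∈ S, ∀ z ∈ S, ∃ w ∈ S, ∀ i,
    majDom (x i) (y i) (z i) → w i = majVal (x i) (y i) (z i)

/-- (v): `S` is weakly closed under the partial majority operation `maj_p`. -/
def WeaklyMajPClosed {ι : Type*} (S : Set (ι → ℤ)) : Prop :=
  ∀ x ∈ S, ∀ y ∈ S, ∀ z ∈ S, (∀ i, majDom (x i) (y i) (z i)) →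
    (fun i => majVal (x i) (y i) (z i)) ∈ S

/-- The projection `π_I(S) ⊆ ℤ^I` of `S ⊆ ℤ^n` onto a set `I` of coordinates. -/
def projOn {n : ℕ} (I : Finset (Fin n)) (S : Set (Fin n → ℤ)) : Set (↥I → ℤ) :=
  (fun x (i : ↥I) => x i.1) '' S

section StmtAux

variable {ι : Type*}

lemma stmt18_majVal_two {a b c v : ℤ}
    (h : (a = v ∧ b = v) ∨ (a = v ∧ c = v) ∨ (b = v ∧ c = v)) :
    majDom a b c ∧ majVal a b c = v := by
  unfold majDom majVal; split_ifs <;> omega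

lemma majVal_pair_aux {a b c : ℤ} (h : majDom a b c) :
    (majVal a b c = a ∧ majVal a b c = b) ∨ (majVal a b c = a ∧ majVal a b c = c) ∨
      (majVal a b c = b ∧ majVal a b c = c) := by
  unfold majDom at h; unfold majVal; split_ifs <;> omega

lemma stmt18_majVal_ab (a b c : ℤ) : majVal a b c = a ∨ majVal a b c = b := by
  unfold majVal; split_ifs <;> omega

lemma stmt18_majOp_eq {f : (Fin 3 → ℤ) → ℤ} (hf : IsMajorityOp f) {a b c : ℤ}
    (h : majDom a b c) : f ![a, b, c] = majVal a b c := by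
  rcases h with rfl | rfl | rfl
  · rw [(hf a c).1]; unfold majVal; split_ifs <;> omega
  · rw [(hf a b).2.1]; unfold majVal; split_ifs <;> omega
  · rw [(hf b a).2.2]; unfold majVal; split_ifs <;> omega

lemma stmt18_maj_to_coord {S : Set (ι → ℤ)} (h : MajClosed S) : CoordMajClosed S := by
  obtain ⟨f, hf, hcl⟩ := h
  refine ⟨fun _ => f, fun _ => hf, ?_⟩
  intro x hx y hy z hz
  have := hcl ![x, y, z] (by intro l; fin_cases l <;> assumption)
  have he : (fun i => f ![x i, y i, z i]) = (fun i => f fun l => ![x, y, z] l i) := by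
    funext i; congr 1; funext l; fin_cases l <;> rfl
  rw [he]; exact this

lemma stmt18_coord_to_strong {S : Set (ι → ℤ)} (h : CoordMajClosed S) :
    StronglyMajPClosed S := by
  obtain ⟨f, hmaj, hcl⟩ := h
  intro x hx y hy z hz
  exact ⟨_, hcl x hx y hy z hz, fun i hdom => stmt18_majOp_eq (hmaj i) hdom⟩

lemma stmt18_strong_to_twodec [Fintype ι] [LinearOrder ι] {S : Set (ι → ℤ)}
    (hcard : 2 ≤ Fintype.card ι) (h : StronglyMajPClosed S) : TwoDecomposable S := by
  apply Set.Subset.antisymm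
  · intro x hx i j _; exact ⟨x, hx, rfl, rfl⟩
  · intro x hx
    simp only [Set.mem_setOf_eq] at hx
    have key : ∀ m (J : Finset ι), J.card = m → 2 ≤ m → ∃ s ∈ S, ∀ i ∈ J, s i = x i := by
      intro m
      induction m using Nat.strong_induction_on with
      | _ m ih =>
        intro J hJ h2
        rcases eq_or_lt_of_le h2 with heq | h3
        · obtain ⟨a, b, hab, rfl⟩ := Finset.card_eq_two.mp (hJ.trans heq.symm)
          rcases hab.lt_or_gt with hlt | hlt
          · obtain ⟨s, hs, h1, h2'⟩ := hx a b hlt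
            refine ⟨s, hs, ?_⟩
            intro i hi
            rcases Finset.mem_insert.mp hi with rfl | hi
            · exact h1
            · rw [Finset.mem_singleton.mp hi]; exact h2'
          · obtain ⟨s, hs, h1, h2'⟩ := hx b a hlt
            refine ⟨s, hs, ?_⟩
            intro i hi
            rcases Finset.mem_insert.mp hi with rfl | hi
            · exact h2'
            · rw [Finset.mem_singleton.mp hi]; exact h1
        · have hc3 : 3 ≤ J.card := by omega
          obtain ⟨i, hi⟩ := Finset.card_pos.mp (by omega : 0 < J.card)
          obtain ⟨j, hj⟩ := Finset.card_pos.mp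
            (show 0 < (J.erase i).card by rw [Finset.card_erase_of_mem hi]; omega)
          obtain ⟨k, hk⟩ := Finset.card_pos.mp
            (show 0 < ((J.erase i).erase j).card by
              rw [Finset.card_erase_of_mem hj, Finset.card_erase_of_mem hi]; omega)
          have hji : j ≠ i := (Finset.mem_erase.mp hj).1
          have hkj : k ≠ j := (Finset.mem_erase.mp hk).1
          have hki : k ≠ i := (Finset.mem_erase.mp (Finset.mem_erase.mp hk).2).1
          have hjJ : j ∈ J := (Finset.mem_erase.mp hj).2
          have hkJ : k ∈ J := (Finset.mem_erase.mp (Finset.mem_erase.mp hk).2).2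
          have cardi : (J.erase i).card = m - 1 := by rw [Finset.card_erase_of_mem hi, hJ]
          have cardj : (J.erase j).card = m - 1 := by rw [Finset.card_erase_of_mem hjJ, hJ]
          have cardk : (J.erase k).card = m - 1 := by rw [Finset.card_erase_of_mem hkJ, hJ]
          obtain ⟨s1, hs1, e1⟩ := ih (m - 1) (by omega) (J.erase i) cardi (by omega)
          obtain ⟨s2, hs2, e2⟩ := ih (m - 1) (by omega) (J.erase j) cardj (by omega)
          obtain ⟨s3, hs3, e3⟩ := ih (m - 1) (by omega) (J.erase k) cardk (by omega)
          obtain ⟨W, hW, hWe⟩ := h s1 hs1 s2 hs2 s3 hs3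
          refine ⟨W, hW, ?_⟩
          intro l hl
          have two : (s1 l = x l ∧ s2 l = x l) ∨ (s1 l = x l ∧ s3 l = x l) ∨
              (s2 l = x l ∧ s3 l = x l) := by
            by_cases hli : l = i
            · subst hli
              exact Or.inr (Or.inr ⟨e2 _ (Finset.mem_erase.mpr ⟨fun hh => hji hh.symm, hl⟩),
                e3 _ (Finset.mem_erase.mpr ⟨fun hh => hki hh.symm, hl⟩)⟩)
            · have h1 : s1 l = x l := e1 _ (Finset.mem_erase.mpr ⟨hli, hl⟩)
              by_cases hlj : l = j
              · subst hlj
                exact Or.inr (Or.inl ⟨h1,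
                  e3 _ (Finset.mem_erase.mpr ⟨fun hh => hkj hh.symm, hl⟩)⟩)
              · exact Or.inl ⟨h1, e2 _ (Finset.mem_erase.mpr ⟨hlj, hl⟩)⟩
          obtain ⟨hdom, hval⟩ := stmt18_majVal_two two
          rw [hWe l hdom, hval]
    obtain ⟨s, hs, he⟩ := key (Fintype.card ι) Finset.univ Finset.card_univ hcard
    have hxs : x = s := funext fun i => (he i (Finset.mem_univ i)).symm
    rw [hxs]; exact hs

lemma stmt18_twodec_to_weak [LinearOrder ι] {S : Set (ι → ℤ)}
    (h : TwoDecomposable S) : WeaklyMajPClosed S := by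
  intro x hx y hy z hz hdom
  rw [h]
  simp only [Set.mem_setOf_eq]
  intro i j _
  rcases majVal_pair_aux (hdom i) with ⟨hi1, hi2⟩ | ⟨hi1, hi2⟩ | ⟨hi1, hi2⟩ <;>
    rcases majVal_pair_aux (hdom j) with ⟨hj1, hj2⟩ | ⟨hj1, hj2⟩ | ⟨hj1, hj2⟩ <;>
    first
      | exact ⟨x, hx, by omega, by omega⟩
      | exact ⟨y, hy, by omega, by omega⟩
      | exact ⟨z, hz, by omega, by omega⟩

end StmtAux

section StmtAux2

variable {n : ℕ} {S : Set (Fin n → ℤ)}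

lemma stmt18_maj_proj (h : MajClosed S) (I : Finset (Fin n)) :
    MajClosed (projOn I S) := by
  obtain ⟨f, hf, hcl⟩ := h
  refine ⟨f, hf, ?_⟩
  intro x hx
  choose X hXS hXe using hx
  refine ⟨fun j => f fun l => X l j, hcl X hXS, ?_⟩
  funext i
  show f (fun l => X l i.1) = f (fun l => x l i)
  congr 1; funext l; exact congrFun (hXe l) i

lemma stmt18_coord_proj (h : CoordMajClosed S) (I : Finset (Fin n)) :
    CoordMajClosed (projOn I S) := by
  obtain ⟨f, hf, hcl⟩ := h
  refine ⟨fun i => f i.1, fun i => hf i.1, ?_⟩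
  intro x hx y hy z hz
  obtain ⟨X, hX, hXe⟩ := hx
  obtain ⟨Y, hY, hYe⟩ := hy
  obtain ⟨Z, hZ, hZe⟩ := hz
  refine ⟨fun j => f j ![X j, Y j, Z j], hcl X hX Y hY Z hZ, ?_⟩
  funext i
  show f i.1 ![X i.1, Y i.1, Z i.1] = f i.1 ![x i, y i, z i]
  rw [← congrFun hXe i, ← congrFun hYe i, ← congrFun hZe i]

lemma stmt18_strong_proj (h : StronglyMajPClosed S) (I : Finset (Fin n)) :
    StronglyMajPClosed (projOn I S) := by
  intro x hx y hy z hz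
  obtain ⟨X, hX, hXe⟩ := hx
  obtain ⟨Y, hY, hYe⟩ := hy
  obtain ⟨Z, hZ, hZe⟩ := hz
  obtain ⟨W, hW, hWe⟩ := h X hX Y hY Z hZ
  refine ⟨fun i => W i.1, ⟨W, hW, rfl⟩, ?_⟩
  intro i hdom
  rw [← congrFun hXe i, ← congrFun hYe i, ← congrFun hZe i] at hdom ⊢
  exact hWe i.1 hdom

lemma stmt18_majClosed_univ (h : MajClosed (projOn (Finset.univ : Finset (Fin n)) S)) :
    MajClosed S := by
  obtain ⟨f, hf, hcl⟩ := h
  refine ⟨f, hf, ?_⟩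
  intro x hx
  obtain ⟨X, hX, hXe⟩ := hcl (fun l => fun i => x l i.1) (fun l => ⟨x l, hx l, rfl⟩)
  have he : (fun i => f fun l => x l i) = X := by
    funext i
    exact (congrFun hXe ⟨i, Finset.mem_univ i⟩).symm
  rw [he]; exact hX

lemma stmt18_coordMajClosed_univ
    (h : CoordMajClosed (projOn (Finset.univ : Finset (Fin n)) S)) :
    CoordMajClosed S := by
  obtain ⟨g, hg, hcl⟩ := h
  refine ⟨fun i => g ⟨i, Finset.mem_univ i⟩, fun i => hg _, ?_⟩
  intro x hx y hy z hz
  obtain ⟨X, hX, hXe⟩ := hcl _ ⟨x, hx, rfl⟩ _ ⟨y, hy, rfl⟩ _ ⟨z, hz, rfl⟩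
  have he : (fun i => g ⟨i, Finset.mem_univ i⟩ ![x i, y i, z i]) = X := by
    funext i
    exact (congrFun hXe ⟨i, Finset.mem_univ i⟩).symm
  rw [he]; exact hX

lemma stmt18_weakHered_to_strong (_hn : 2 ≤ n)
    (h : ∀ I : Finset (Fin n), 2 ≤ I.card → WeaklyMajPClosed (projOn I S)) :
    StronglyMajPClosed S := by
  classical
  intro x hx y hy z hz
  set D : Finset (Fin n) := Finset.univ.filter (fun i => majDom (x i) (y i) (z i)) with hD
  have hmemD : ∀ i, majDom (x i) (y i) (z i) → i ∈ D := by
    intro i hdom; simp [hD, hdom]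
  by_cases h2 : 2 ≤ D.card
  · have hw := h D h2 _ ⟨x, hx, rfl⟩ _ ⟨y, hy, rfl⟩ _ ⟨z, hz, rfl⟩
      (fun i => (Finset.mem_filter.mp i.2).2)
    obtain ⟨W, hW, hWe⟩ := hw
    refine ⟨W, hW, ?_⟩
    intro i hdom
    exact congrFun hWe ⟨i, hmemD i hdom⟩
  · have huniq : ∀ a ∈ D, ∀ b ∈ D, a = b := Finset.card_le_one.mp (by omega)
    rcases Finset.eq_empty_or_nonempty D with hemp | ⟨i0, hi0⟩
    · refine ⟨x, hx, ?_⟩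
      intro i hdom
      exact absurd (hmemD i hdom) (by simp [hemp])
    · rcases stmt18_majVal_ab (x i0) (y i0) (z i0) with hv | hv
      · refine ⟨x, hx, ?_⟩
        intro i hdom
        have : i = i0 := huniq _ (hmemD i hdom) _ hi0
        subst this; exact hv.symm
      · refine ⟨y, hy, ?_⟩
        intro i hdom
        have : i = i0 := huniq _ (hmemD i hdom) _ hi0
        subst this; exact hv.symm

end StmtAux2

/-- the chain (i) ⇒ (ii) ⇒ (iii) ⇒ (iv) ⇒ (v), (i) and (ii) are
equivalent to their hereditary versions, and the hereditary versions of (iii),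
(iv), (v) are all equivalent to (iii). -/
theorem stmt_18 {n : ℕ} (hn : 2 ≤ n) (S : Set (Fin n → ℤ)) :
    (MajClosed S → CoordMajClosed S) ∧
    (CoordMajClosed S → StronglyMajPClosed S) ∧
    (StronglyMajPClosed S → TwoDecomposable S) ∧
    (TwoDecomposable S → WeaklyMajPClosed S) ∧
    (MajClosed S ↔
      ∀ I : Finset (Fin n), 2 ≤ I.card → MajClosed (projOn I S)) ∧
    (CoordMajClosed S ↔
      ∀ I : Finset (Fin n), 2 ≤ I.card → CoordMajClosed (projOn I S)) ∧
    ((∀ I : Finset (Fin n), 2 ≤ I.card → StronglyMajPClosed (projOn I S)) ↔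
      StronglyMajPClosed S) ∧
    ((∀ I : Finset (Fin n), 2 ≤ I.card → TwoDecomposable (projOn I S)) ↔
      StronglyMajPClosed S) ∧
    ((∀ I : Finset (Fin n), 2 ≤ I.card → WeaklyMajPClosed (projOn I S)) ↔
      StronglyMajPClosed S) := by
  have hcardI : ∀ I : Finset (Fin n), 2 ≤ I.card → 2 ≤ Fintype.card ↥I := by
    intro I hI; rwa [Fintype.card_coe]
  have hcardn : 2 ≤ Fintype.card (Fin n) := by simpa using hn
  have hunivcard : 2 ≤ (Finset.univ : Finset (Fin n)).card := by
    simpa [Finset.card_univ] using hn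
  refine ⟨stmt18_maj_to_coord, stmt18_coord_to_strong,
    fun h => stmt18_strong_to_twodec hcardn h, stmt18_twodec_to_weak,
    ⟨fun h I _ => stmt18_maj_proj h I, fun h => stmt18_majClosed_univ (h _ hunivcard)⟩,
    ⟨fun h I _ => stmt18_coord_proj h I,
      fun h => stmt18_coordMajClosed_univ (h _ hunivcard)⟩,
    ⟨fun h => stmt18_weakHered_to_strong hn
        (fun I hI => stmt18_twodec_to_weak (stmt18_strong_to_twodec (hcardI I hI) (h I hI))),
      fun h I _ => stmt18_strong_proj h I⟩,
    ⟨fun h => stmt18_weakHered_to_strong hn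
        (fun I hI => stmt18_twodec_to_weak (h I hI)),
      fun h I hI => stmt18_strong_to_twodec (hcardI I hI) (stmt18_strong_proj h I)⟩,
    ⟨stmt18_weakHered_to_strong hn,
      fun h I hI => stmt18_twodec_to_weak
        (stmt18_strong_to_twodec (hcardI I hI) (stmt18_strong_proj h I))⟩⟩
end

section
/- Let n ≥ 2 and S ⊆ ℤ^n. Then S is 2-decomposable if and only if, for every integer k ≥ 2, S is weakly closed under the partial operation f^(k); that is, for every family (x^e)_{e ∈ T_k} of elements of S such that for each coordinate i ∈ {1,…,n} the tuple (x^e_i)_{e ∈ T_k} lies in dom(f^(k)), the vector whose i-th coordinate is f^(k)((x^e_i)_{e ∈ T_k}) belongs to S. -/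
/-- `S` is 2-decomposable iff, for every `k ≥ 2`, `S` is weakly closed
under the partial operation `f^(k)` whose arguments are indexed by the 2-element
subsets of `{1,…,k}`: for every family `(x^e)_{e ∈ T_k}` of elements of `S` such
that every coordinate tuple lies in the domain of `f^(k)` (with value `y i` at
coordinate `i`), the vector `y` belongs to `S`. -/
theorem stmt_19 {n : ℕ} (hn : 2 ≤ n) (S : Set (Fin n → ℤ)) :
    TwoDecomposable S ↔
      ∀ k : ℕ, 2 ≤ k →
        ∀ x : {e : Finset (Fin k) // e.card = 2} → (Fin n → ℤ),
          (∀ e, x e ∈ S) →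
          ∀ y : Fin n → ℤ,
            (∀ i : Fin n, ∃ ℓ : Fin k, ∀ m : Fin k, (hm : m ≠ ℓ) →
              x ⟨{ℓ, m}, Finset.card_pair (Ne.symm hm)⟩ i = y i) →
            y ∈ S := by
  constructor
  · intro hTD k hk x hx y hy
    rw [hTD]
    intro i j hij
    obtain ⟨ℓi, hℓi⟩ := hy i
    obtain ⟨ℓj, hℓj⟩ := hy j
    by_cases h : ℓi = ℓj
    · subst h
      obtain ⟨k', rfl⟩ : ∃ k', k = k' + 2 := ⟨k - 2, by omega⟩
      obtain ⟨m, hm⟩ := exists_ne ℓi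
      exact ⟨x ⟨{ℓi, m}, Finset.card_pair (Ne.symm hm)⟩, hx _, hℓi m hm, hℓj m hm⟩
    · refine ⟨x ⟨{ℓi, ℓj}, Finset.card_pair h⟩, hx _, hℓi ℓj (Ne.symm h), ?_⟩
      have hpair : (⟨{ℓj, ℓi}, Finset.card_pair (Ne.symm h)⟩ :
          {e : Finset (Fin k) // e.card = 2}) =
          ⟨{ℓi, ℓj}, Finset.card_pair h⟩ := Subtype.ext (Finset.pair_comm _ _)
      rw [← hpair]
      exact hℓj ℓi h
  · intro hcl
    apply Set.Subset.antisymm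
    · intro z hz i j hij
      exact ⟨z, hz, rfl, rfl⟩
    · intro y hy
      have hex : ∀ e : {e : Finset (Fin n) // e.card = 2},
          ∃ s ∈ S, ∀ i ∈ e.1, s i = y i := by
        rintro ⟨e, he⟩
        obtain ⟨a, b, hab, rfl⟩ := Finset.card_eq_two.mp he
        rcases hab.lt_or_gt with hlt | hlt
        · obtain ⟨s, hs, h1, h2⟩ := hy a b hlt
          refine ⟨s, hs, fun i hi => ?_⟩
          simp only [Finset.mem_insert, Finset.mem_singleton] at hi
          rcases hi with rfl | rfl <;> assumption
        · obtain ⟨s, hs, h1, h2⟩ := hy b a hlt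
          refine ⟨s, hs, fun i hi => ?_⟩
          simp only [Finset.mem_insert, Finset.mem_singleton] at hi
          rcases hi with rfl | rfl <;> assumption
      choose x hxS hxeq using hex
      refine hcl n hn x hxS y fun i => ⟨i, fun m hm => hxeq _ i ?_⟩
      simp
end
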